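/- arXiv:2306.13788 — 6 statements merged into one kernel-verified Lean document; each statement's English description precedes it below -/
import Mathlib

section
/- Let a, b > 0 and let f satisfy hypothesis (H) and be of type A, B, or C. Then every admissible speed c (for f, a, b) satisfies the universal lower bound c ≥ (b/a) · sup_{v ∈ (0,1]} F(v)/v, independently of the shape of f. -/
open Real Set Filter Topology

/-- `Ffn f v = ∫₀^v f(s) ds`. -/
noncomputable def Ffn (f : ℝ → ℝ) (v : ℝ) : ℝ := ∫ s in (0:ℝ)..v, f s

/-- Hypothesis (H): `f` continuous on `[0,1]`, vanishing at the endpoints,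
with linear controls at `0` and `1`. -/
def HypH (f : ℝ → ℝ) : Prop :=
  ContinuousOn f (Set.Icc 0 1) ∧ f 0 = 0 ∧ f 1 = 0 ∧
    ∃ k > (0:ℝ), ∀ s ∈ Set.Icc (0:ℝ) 1, |f s| ≤ k * s ∧ |f s| ≤ k * (1 - s)

/-- Type A (monostable): `f > 0` on `(0,1)`. -/
def TypeA (f : ℝ → ℝ) : Prop := ∀ s ∈ Set.Ioo (0:ℝ) 1, 0 < f s

/-- Type B (combustion) with switching point `α`. -/
def TypeB (f : ℝ → ℝ) (α : ℝ) : Prop :=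
  α ∈ Set.Ioo (0:ℝ) 1 ∧ (∀ s ∈ Set.Icc (0:ℝ) α, f s = 0) ∧
    ∀ s ∈ Set.Ioo α 1, 0 < f s

/-- Type C (bistable) with switching point `α` and `∫₀¹ f ≥ 0`. -/
def TypeC (f : ℝ → ℝ) (α : ℝ) : Prop :=
  α ∈ Set.Ioo (0:ℝ) 1 ∧ (∀ s ∈ Set.Ioo (0:ℝ) α, f s < 0) ∧
    (∀ s ∈ Set.Ioo α 1, 0 < f s) ∧ 0 ≤ Ffn f 1

/-- `R_{a,b}(s) = √(s(2a + b²s))/(a + b²s)`. -/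
noncomputable def Rab (a b s : ℝ) : ℝ :=
  Real.sqrt (s * (2 * a + b ^ 2 * s)) / (a + b ^ 2 * s)

/-- `c` is an admissible speed for `(f, a, b)`: the first-order reduction
`y' = c·a·R_{a,b}(y) − f(v)` has a solution on `[0,1]` with `y(0) = y(1) = 0`
and `y > 0` on `(0,1)`. -/
def Admissible (f : ℝ → ℝ) (a b c : ℝ) : Prop :=
  ∃ y : ℝ → ℝ, y 0 = 0 ∧ y 1 = 0 ∧ (∀ v ∈ Set.Ioo (0:ℝ) 1, 0 < y v) ∧
    ∀ v ∈ Set.Icc (0:ℝ) 1,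
      HasDerivWithinAt y (c * a * Rab a b (y v) - f v) (Set.Icc 0 1) v

/-- A (monotone) front profile propagating with speed `c` for parameters `a, b`:
a strictly increasing `C²` solution of `(v'/√(a² − b²(v')²))' − c v' + f(v) = 0`
with `|v'| < a/b`, connecting `0` (at `−∞`) and `1` (at `+∞`). -/
def FrontProfile (f : ℝ → ℝ) (a b c : ℝ) (v : ℝ → ℝ) : Prop :=
  StrictMono v ∧ ContDiff ℝ 2 v ∧ (∀ z, |deriv v z| < a / b) ∧
    (∀ z, deriv (fun t => deriv v t / Real.sqrt (a ^ 2 - b ^ 2 * (deriv v t) ^ 2)) z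
        - c * deriv v z + f (v z) = 0) ∧
    Filter.Tendsto v Filter.atBot (nhds 0) ∧ Filter.Tendsto v Filter.atTop (nhds 1)

section Aux

variable {a b : ℝ}

lemma Rab_le_inv (ha : 0 < a) (hb : 0 < b) {s : ℝ} (hs : 0 ≤ s) :
    Rab a b s ≤ 1 / b := by
  have hden : 0 < a + b ^ 2 * s := by positivity
  have hX : 0 ≤ s * (2 * a + b ^ 2 * s) := by positivity
  have hsq : s * (2 * a + b ^ 2 * s) ≤ ((a + b ^ 2 * s) / b) ^ 2 := by
    rw [div_pow, le_div_iff₀ (by positivity : (0:ℝ) < b ^ 2)]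
    nlinarith [sq_nonneg a, sq_nonneg (b * s)]
  have h1 : Real.sqrt (s * (2 * a + b ^ 2 * s)) ≤ (a + b ^ 2 * s) / b := by
    calc Real.sqrt (s * (2 * a + b ^ 2 * s)) ≤ Real.sqrt (((a + b ^ 2 * s) / b) ^ 2) :=
          Real.sqrt_le_sqrt hsq
      _ = (a + b ^ 2 * s) / b := Real.sqrt_sq (by positivity)
  calc Rab a b s ≤ ((a + b ^ 2 * s) / b) / (a + b ^ 2 * s) := by
        rw [Rab]; exact (div_le_div_iff_of_pos_right hden).mpr h1
    _ = 1 / b := by field_simp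

lemma Rab_pos (ha : 0 < a) (hb : 0 < b) {s : ℝ} (hs : 0 < s) : 0 < Rab a b s := by
  have hden : 0 < a + b ^ 2 * s := by positivity
  exact div_pos (Real.sqrt_pos.mpr (by positivity)) hden

lemma Rab_continuousAt (ha : 0 < a) (hb : 0 < b) {s : ℝ} (hs : 0 ≤ s) :
    ContinuousAt (Rab a b) s := by
  have hden : (a + b ^ 2 * s) ≠ 0 := by positivity
  exact ContinuousAt.div (by fun_prop) (by fun_prop) hden

end Aux

/-- universal lower bound `c ≥ (b/a)·sup_{v ∈ (0,1]} F(v)/v`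
for every admissible speed, for reactions of type A, B or C satisfying (H). -/
theorem statement2 (f : ℝ → ℝ) (a b : ℝ) (ha : 0 < a) (hb : 0 < b)
    (hH : HypH f) (hT : TypeA f ∨ ∃ α : ℝ, TypeB f α ∨ TypeC f α)
    (c : ℝ) (hc : Admissible f a b c) :
    b / a * (⨆ v : Set.Ioc (0:ℝ) 1, Ffn f v / (v : ℝ)) ≤ c := by
  obtain ⟨y, hy0, hy1, hypos, hyd⟩ := hc
  obtain ⟨hfc, hf0, hf1, -⟩ := hH
  -- y is nonnegative on [0,1]
  have hynn : ∀ v ∈ Set.Icc (0:ℝ) 1, 0 ≤ y v := by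
    rintro v ⟨hv0, hv1⟩
    rcases hv0.eq_or_lt with rfl | h0
    · exact hy0.ge
    rcases hv1.eq_or_lt with rfl | h1
    · exact hy1.ge
    exact (hypos v ⟨h0, h1⟩).le
  -- continuity facts
  have hyc : ContinuousOn y (Set.Icc 0 1) := fun v hv => (hyd v hv).continuousWithinAt
  have hRc : ContinuousOn (fun v => c * a * Rab a b (y v)) (Set.Icc 0 1) := by
    apply ContinuousOn.mul continuousOn_const
    intro v hv
    exact (Rab_continuousAt ha hb (hynn v hv)).comp_continuousWithinAt (hyc v hv)
  have hDc : ContinuousOn (fun v => c * a * Rab a b (y v) - f v) (Set.Icc 0 1) :=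
    hRc.sub hfc
  -- FTC + splitting: for v in [0,1], ∫₀ᵛ c a R(y) = y v + F v
  have hsplit : ∀ v ∈ Set.Icc (0:ℝ) 1,
      ∫ s in (0:ℝ)..v, c * a * Rab a b (y s) = y v + Ffn f v := by
    intro v hv
    have hsub : Set.Icc (0:ℝ) v ⊆ Set.Icc 0 1 := Set.Icc_subset_Icc le_rfl hv.2
    have hintR : IntervalIntegrable (fun s => c * a * Rab a b (y s)) MeasureTheory.volume 0 v := by
      apply ContinuousOn.intervalIntegrable
      rw [Set.uIcc_of_le hv.1]; exact hRc.mono hsub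
    have hintf : IntervalIntegrable f MeasureTheory.volume 0 v := by
      apply ContinuousOn.intervalIntegrable
      rw [Set.uIcc_of_le hv.1]; exact hfc.mono hsub
    have hftc : ∫ s in (0:ℝ)..v, (c * a * Rab a b (y s) - f s) = y v - y 0 := by
      apply intervalIntegral.integral_eq_sub_of_hasDeriv_right_of_le hv.1 (hyc.mono hsub)
      · intro x hx
        have hx1 : x ∈ Set.Ioo (0:ℝ) 1 := ⟨hx.1, lt_of_lt_of_le hx.2 hv.2⟩
        have := (hyd x ⟨hx1.1.le, hx1.2.le⟩).hasDerivAt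
          (Icc_mem_nhds hx1.1 hx1.2)
        exact this.hasDerivWithinAt
      · exact hintR.sub hintf
    rw [intervalIntegral.integral_sub hintR hintf, hy0, sub_zero] at hftc
    have : Ffn f v = ∫ s in (0:ℝ)..v, f s := rfl
    linarith [hftc]
  -- F(1) ≥ 0 in all three cases
  have hF1 : 0 ≤ Ffn f 1 := by
    have hnn : (∀ s ∈ Set.Icc (0:ℝ) 1, 0 ≤ f s) → 0 ≤ Ffn f 1 := fun h =>
      intervalIntegral.integral_nonneg (by norm_num) h
    rcases hT with hA | ⟨α, hB | hC⟩
    · apply hnn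
      rintro s ⟨hs0, hs1⟩
      rcases hs0.eq_or_lt with rfl | h0
      · exact hf0.ge
      rcases hs1.eq_or_lt with rfl | h1
      · exact hf1.ge
      exact (hA s ⟨h0, h1⟩).le
    · obtain ⟨hα, hB0, hBpos⟩ := hB
      apply hnn
      rintro s ⟨hs0, hs1⟩
      rcases le_or_gt s α with h | h
      · exact (hB0 s ⟨hs0, h⟩).ge
      rcases hs1.eq_or_lt with rfl | h1
      · exact hf1.ge
      exact (hBpos s ⟨h, h1⟩).le
    · exact hC.2.2.2
  -- c must be nonnegative
  have hc0 : 0 ≤ c := by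
    by_contra hneg
    push_neg at hneg
    have h1 := hsplit 1 ⟨zero_le_one, le_rfl⟩
    rw [hy1, zero_add] at h1
    have hpos : 0 < ∫ s in (0:ℝ)..1, -(c * a * Rab a b (y s)) := by
      apply intervalIntegral.intervalIntegral_pos_of_pos_on
      · apply ContinuousOn.intervalIntegrable
        rw [Set.uIcc_of_le zero_le_one]; exact hRc.neg
      · intro x hx
        have hR := Rab_pos ha hb (hypos x hx)
        nlinarith [mul_pos (mul_pos (neg_pos.mpr hneg) ha) hR]
      · exact one_pos
    rw [intervalIntegral.integral_neg, h1] at hpos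
    linarith
  -- key bound: F(v)/v ≤ c a / b for v ∈ (0,1]
  have key : ∀ v ∈ Set.Ioc (0:ℝ) 1, Ffn f v / v ≤ c * a / b := by
    rintro v ⟨hv0, hv1⟩
    have hvIcc : v ∈ Set.Icc (0:ℝ) 1 := ⟨hv0.le, hv1⟩
    have hsub : Set.Icc (0:ℝ) v ⊆ Set.Icc 0 1 := Set.Icc_subset_Icc le_rfl hv1
    have hmono : ∫ s in (0:ℝ)..v, c * a * Rab a b (y s)
        ≤ ∫ _s in (0:ℝ)..v, c * a / b := by
      apply intervalIntegral.integral_mono_on hv0.le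
      · apply ContinuousOn.intervalIntegrable
        rw [Set.uIcc_of_le hv0.le]; exact hRc.mono hsub
      · exact intervalIntegrable_const
      · intro x hx
        have hle := Rab_le_inv ha hb (hynn x (hsub hx))
        have hca : 0 ≤ c * a := by positivity
        calc c * a * Rab a b (y x) ≤ c * a * (1 / b) := by
              exact mul_le_mul_of_nonneg_left hle hca
          _ = c * a / b := by ring
    rw [intervalIntegral.integral_const, smul_eq_mul, sub_zero] at hmono
    have hsp := hsplit v hvIcc
    have hy := hynn v hvIcc
    rw [div_le_iff₀ hv0]
    nlinarith
  -- take supremum and conclude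
  have hne : Nonempty (Set.Ioc (0:ℝ) 1) := ⟨⟨1, by norm_num⟩⟩
  have hsup : (⨆ v : Set.Ioc (0:ℝ) 1, Ffn f v / (v : ℝ)) ≤ c * a / b :=
    ciSup_le fun ⟨v, hv⟩ => key v hv
  have hba : (0:ℝ) < b / a := by positivity
  calc b / a * (⨆ v : Set.Ioc (0:ℝ) 1, Ffn f v / (v : ℝ))
      ≤ b / a * (c * a / b) := by
        exact mul_le_mul_of_nonneg_left hsup hba.le
    _ = c := by field_simp
end

section
/- Let a, b > 0 and let f : ℝ → ℝ be continuous on [0,1] with f(0) = f(1) = 0, f(s) > 0 for all s ∈ (0,1), and lim_{s→0⁺} f(s)/s = +∞. Then there exists no admissible speed (for f, a, b): for no c ∈ ℝ does the first-order boundary value problem admit a solution. -/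
open Real Set Filter Topology

set_option maxHeartbeats 1000000 in
/-- if `f > 0` on `(0,1)` and `f(s)/s → +∞` as `s → 0⁺`, then no
admissible speed exists. -/
theorem statement5 (f : ℝ → ℝ) (a b : ℝ) (ha : 0 < a) (hb : 0 < b)
    (hcont : ContinuousOn f (Set.Icc 0 1)) (h0 : f 0 = 0) (h1 : f 1 = 0)
    (hpos : ∀ s ∈ Set.Ioo (0:ℝ) 1, 0 < f s)
    (hslope : Filter.Tendsto (fun s => f s / s)
      (nhdsWithin 0 (Set.Ioi 0)) Filter.atTop) :
    ∀ c : ℝ, ¬ Admissible f a b c := by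
  intro c hadm
  obtain ⟨y, hy0, hy1, hypos, hyd⟩ := hadm
  set K : ℝ := |c| * Real.sqrt (2 * a) with hKdef
  have hK0 : 0 ≤ K := by positivity
  -- key bound : c * a * Rab a b s ≤ K * √s for s ≥ 0
  have hbound : ∀ s : ℝ, 0 ≤ s → c * a * Rab a b s ≤ K * Real.sqrt s := by
    intro s hs
    have hden : (0:ℝ) < a + b ^ 2 * s := by positivity
    have hR0 : 0 ≤ Rab a b s := by
      unfold Rab; positivity
    have h1 : c * a * Rab a b s ≤ |c| * (a * Rab a b s) := by
      have : c * (a * Rab a b s) ≤ |c| * (a * Rab a b s) :=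
        mul_le_mul_of_nonneg_right (le_abs_self c) (by positivity)
      linarith [this, mul_assoc c a (Rab a b s)]
    have h2 : a * Rab a b s ≤ Real.sqrt (2 * a * s) := by
      unfold Rab
      rw [mul_div_assoc', div_le_iff₀ hden]
      have e1 : a * Real.sqrt (s * (2 * a + b ^ 2 * s))
          = Real.sqrt (a ^ 2 * (s * (2 * a + b ^ 2 * s))) := by
        rw [Real.sqrt_mul (sq_nonneg a) (s * (2 * a + b ^ 2 * s)), Real.sqrt_sq ha.le]
      have e2 : Real.sqrt (2 * a * s) * (a + b ^ 2 * s)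
          = Real.sqrt (2 * a * s * (a + b ^ 2 * s) ^ 2) := by
        rw [Real.sqrt_mul (by positivity : (0:ℝ) ≤ 2 * a * s) ((a + b ^ 2 * s) ^ 2),
          Real.sqrt_sq hden.le]
      rw [e1, e2]
      apply Real.sqrt_le_sqrt
      nlinarith [sq_nonneg (b * s), mul_nonneg hs (sq_nonneg (b^2*s)), mul_nonneg (mul_nonneg ha.le hs) (sq_nonneg b), mul_nonneg (mul_nonneg (mul_nonneg ha.le ha.le) hs) (sq_nonneg b)]
    calc c * a * Rab a b s ≤ |c| * (a * Rab a b s) := h1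
      _ ≤ |c| * Real.sqrt (2 * a * s) := mul_le_mul_of_nonneg_left h2 (abs_nonneg c)
      _ = K * Real.sqrt s := by rw [hKdef, Real.sqrt_mul (by positivity : (0:ℝ) ≤ 2 * a) s, ← mul_assoc]
  have hycont : ContinuousOn y (Icc 0 1) := fun v hv => (hyd v hv).continuousWithinAt
  have hynn : ∀ v ∈ Icc (0:ℝ) 1, 0 ≤ y v := by
    intro v hv
    rcases eq_or_lt_of_le hv.1 with h | h
    · rw [← h]; simp [hy0]
    rcases eq_or_lt_of_le hv.2 with h' | h'
    · rw [h']; simp [hy1]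
    · exact (hypos v ⟨h, h'⟩).le
  have hfnn : ∀ v ∈ Icc (0:ℝ) 1, 0 ≤ f v := by
    intro v hv
    rcases eq_or_lt_of_le hv.1 with h | h
    · rw [← h]; simp [h0]
    rcases eq_or_lt_of_le hv.2 with h' | h'
    · rw [h']; simp [h1]
    · exact (hpos v ⟨h, h'⟩).le
  have hderiv : ∀ x ∈ Ico (0:ℝ) 1,
      HasDerivWithinAt y (c * a * Rab a b (y x) - f x) (Ici x) x := by
    intro x hx
    exact (hyd x ⟨hx.1, hx.2.le⟩).mono_of_mem_nhdsWithin (Icc_mem_nhdsGE_of_mem ⟨hx.1, hx.2⟩)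
  set γ : ℝ := (K / 2 + 1) ^ 2 with hγdef
  have hγroot : Real.sqrt γ = K / 2 + 1 := Real.sqrt_sq (by linarith)
  -- Stage 1 : y v ≤ γ v² on [0,1]
  have stage1 : ∀ v ∈ Icc (0:ℝ) 1, y v ≤ γ * v ^ 2 := by
    intro v hv
    have hεall : ∀ ε : ℝ, 0 < ε → y v ≤ γ * (v + ε) ^ 2 := by
      intro ε hε
      have hB : ∀ t : ℝ, HasDerivAt (fun t => γ * (t + ε) ^ 2) (γ * (2 * (t + ε))) t := by
        intro t
        have := ((hasDerivAt_id t).add_const ε).pow 2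
        simpa [mul_comm, mul_assoc, mul_left_comm] using this.const_mul γ
      refine image_le_of_deriv_right_lt_deriv_boundary hycont hderiv ?_ hB ?_ hv
      · rw [hy0]; positivity
      · intro x hx hxy
        have hx0 : 0 ≤ x := hx.1
        have hxε : 0 < x + ε := by linarith
        have hyx : 0 ≤ y x := hynn x ⟨hx.1, hx.2.le⟩
        have hfx : 0 ≤ f x := hfnn x ⟨hx.1, hx.2.le⟩
        have hb1 : c * a * Rab a b (y x) ≤ K * Real.sqrt (y x) := hbound _ hyx
        have hsq : Real.sqrt (y x) = (K / 2 + 1) * (x + ε) := by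
          rw [hxy, hγdef, Real.sqrt_mul (sq_nonneg _), Real.sqrt_sq (by linarith : (0:ℝ) ≤ K/2+1), Real.sqrt_sq hxε.le]
        have : K * ((K / 2 + 1) * (x + ε)) < γ * (2 * (x + ε)) := by
          rw [hγdef]; nlinarith
        calc c * a * Rab a b (y x) - f x ≤ K * Real.sqrt (y x) := by linarith
          _ = K * ((K / 2 + 1) * (x + ε)) := by rw [hsq]
          _ < γ * (2 * (x + ε)) := this
    have htend : Tendsto (fun ε : ℝ => γ * (v + ε) ^ 2) (𝓝[>] (0:ℝ)) (𝓝 (γ * v ^ 2)) := by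
      have : Continuous (fun ε : ℝ => γ * (v + ε) ^ 2) := by continuity
      have h := (this.tendsto 0).mono_left (nhdsWithin_le_nhds (s := Ioi (0:ℝ)))
      simpa using h
    exact ge_of_tendsto htend (eventually_nhdsWithin_of_forall (fun ε hε => hεall ε hε))
  -- Stage 2 : superlinearity forces y to go negative
  set M : ℝ := K * (K / 2 + 1) + 1 with hMdef
  have hM : ∀ᶠ s in 𝓝[>] (0:ℝ), M ≤ f s / s := hslope.eventually_ge_atTop M
  rw [eventually_nhdsWithin_iff] at hM
  obtain ⟨δ, hδpos, hδ⟩ := Metric.eventually_nhds_iff.mp hM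
  set d : ℝ := min δ 1 with hddef
  have hd0 : 0 < d := lt_min hδpos one_pos
  have hd1 : d ≤ 1 := min_le_right _ _
  have hflin : ∀ x : ℝ, 0 < x → x < d → M * x ≤ f x := by
    intro x hx hxd
    have h1 : dist x 0 < δ := by
      rw [Real.dist_eq, sub_zero, abs_of_pos hx]
      exact lt_of_lt_of_le hxd (min_le_left _ _)
    have := hδ h1 (mem_Ioi.mpr hx)
    rw [le_div_iff₀ hx] at this
    linarith
  have key : ∀ ε : ℝ, 0 < ε → y d ≤ ε - d ^ 2 / 4 := by
    intro ε hε
    have hB : ∀ t : ℝ, HasDerivAt (fun t => ε - t ^ 2 / 4) (-(t / 2)) t := by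
      intro t
      have h := ((hasDerivAt_pow 2 t).div_const 4).const_sub ε
      refine h.congr_deriv ?_
      norm_num
      ring
    have hsub : Icc (0:ℝ) d ⊆ Icc 0 1 := Icc_subset_Icc le_rfl hd1
    have hderiv' : ∀ x ∈ Ico (0:ℝ) d,
        HasDerivWithinAt y (c * a * Rab a b (y x) - f x) (Ici x) x := fun x hx =>
      hderiv x ⟨hx.1, lt_of_lt_of_le hx.2 hd1⟩
    refine image_le_of_deriv_right_lt_deriv_boundary (hycont.mono hsub) hderiv'
      (by rw [hy0]; norm_num; exact hε.le) hB ?_ (right_mem_Icc.mpr hd0.le)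
    intro x hx hxy
    rcases eq_or_lt_of_le hx.1 with h | hx0
    · exfalso
      rw [← h] at hxy
      rw [hy0] at hxy
      norm_num at hxy
      linarith
    have hxd : x < d := hx.2
    have hx1 : x < 1 := lt_of_lt_of_le hxd hd1
    have hyx : 0 ≤ y x := (hypos x ⟨hx0, hx1⟩).le
    have hb1 : c * a * Rab a b (y x) ≤ K * Real.sqrt (y x) := hbound _ hyx
    have hs1 : y x ≤ γ * x ^ 2 := stage1 x ⟨hx0.le, hx1.le⟩
    have hsq : Real.sqrt (y x) ≤ (K / 2 + 1) * x := by
      have : Real.sqrt (y x) ≤ Real.sqrt (γ * x ^ 2) := Real.sqrt_le_sqrt hs1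
      rwa [hγdef, Real.sqrt_mul (sq_nonneg _) (x ^ 2),
        Real.sqrt_sq (by linarith : (0:ℝ) ≤ K / 2 + 1), Real.sqrt_sq hx0.le] at this
    have hf : M * x ≤ f x := hflin x hx0 hxd
    have : K * Real.sqrt (y x) ≤ K * ((K / 2 + 1) * x) :=
      mul_le_mul_of_nonneg_left hsq hK0
    rw [hMdef] at hf
    have e : K * ((K / 2 + 1) * x) = K * (K / 2 + 1) * x := by ring
    have e2 : (K * (K / 2 + 1) + 1) * x = K * (K / 2 + 1) * x + x := by ring
    linarith
  have hyd0 : y d ≤ - d ^ 2 / 4 := by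
    refine le_of_forall_pos_le_add fun ε hε => ?_
    have := key ε hε
    linarith
  have hge : 0 ≤ y d := hynn d ⟨hd0.le, hd1⟩
  nlinarith [mul_pos hd0 hd0, sq_nonneg d]
end

section
/- Let a, b > 0 and let f satisfy hypothesis (H), be of type A, and be differentiable from the right at 0 with derivative f'(0). Then every admissible speed c (for f, a, b) satisfies c ≥ 2·√(f'(0)/a). -/
open Real Set Filter Topology

lemma Rab_nonneg {a b s : ℝ} (ha : 0 < a) (hs : 0 ≤ s) : 0 ≤ Rab a b s :=
  div_nonneg (Real.sqrt_nonneg _) (by positivity)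

lemma aR_le {a : ℝ} (b : ℝ) (ha : 0 < a) {s : ℝ} (hs : 0 ≤ s) :
    a * Rab a b s ≤ Real.sqrt (2 * a * s) := by
  unfold Rab
  have hD : 0 < a + b ^ 2 * s := by positivity
  rw [mul_div_assoc', div_le_iff₀ hD]
  have h1 : Real.sqrt (a ^ 2 * (s * (2 * a + b ^ 2 * s)))
      = a * Real.sqrt (s * (2 * a + b ^ 2 * s)) := by
    rw [Real.sqrt_mul (sq_nonneg a), Real.sqrt_sq ha.le]
  have h2 : Real.sqrt (2 * a * s * (a + b ^ 2 * s) ^ 2)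
      = Real.sqrt (2 * a * s) * (a + b ^ 2 * s) := by
    rw [mul_comm (2 * a * s), Real.sqrt_mul (sq_nonneg _), Real.sqrt_sq hD.le, mul_comm]
  rw [← h1, ← h2]
  apply Real.sqrt_le_sqrt
  nlinarith [mul_nonneg (mul_nonneg ha.le hs) hs, sq_nonneg b, sq_nonneg s,
    mul_nonneg (mul_nonneg (mul_nonneg ha.le (sq_nonneg b)) hs) hs,
    mul_nonneg (mul_nonneg (mul_nonneg (sq_nonneg b) (sq_nonneg b)) (mul_nonneg hs hs)) hs,
    mul_nonneg ha.le hs]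

lemma antitoneOn_of_hasDeriv {g g' : ℝ → ℝ} {p q : ℝ}
    (hg : ∀ v ∈ Set.Icc p q, HasDerivWithinAt g (g' v) (Set.Icc p q) v)
    (h' : ∀ v ∈ Set.Ioo p q, g' v ≤ 0) : AntitoneOn g (Set.Icc p q) := by
  have hcont : ContinuousOn g (Set.Icc p q) := fun v hv => (hg v hv).continuousWithinAt
  have hderiv : ∀ v ∈ interior (Set.Icc p q), HasDerivAt g (g' v) v := by
    intro v hv
    rw [interior_Icc] at hv
    exact (hg v (Set.Ioo_subset_Icc_self hv)).hasDerivAt (Icc_mem_nhds hv.1 hv.2)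
  exact antitoneOn_of_deriv_nonpos (convex_Icc p q) hcont
    (fun v hv => (hderiv v hv).differentiableAt.differentiableWithinAt)
    (fun v hv => by
      rw [(hderiv v hv).deriv]
      exact h' v (by rwa [interior_Icc] at hv))

set_option maxHeartbeats 2000000 in
/-- if `f` is of type A, satisfies (H), and has right derivative
`f'(0)` at `0`, then every admissible speed satisfies `c ≥ 2√(f'(0)/a)`. -/
theorem statement6 (f : ℝ → ℝ) (a b d : ℝ) (ha : 0 < a) (hb : 0 < b)
    (hH : HypH f) (hA : TypeA f)
    (hd : HasDerivWithinAt f d (Set.Ici 0) 0)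
    (c : ℝ) (hc : Admissible f a b c) :
    2 * Real.sqrt (d / a) ≤ c := by
  obtain ⟨hfc, hf0, hf1, k, hk, hkb⟩ := hH
  obtain ⟨y, hy0, hy1, hypos, hyd⟩ := hc
  have hy_nonneg : ∀ v ∈ Set.Icc (0:ℝ) 1, 0 ≤ y v := by
    intro v hv
    rcases eq_or_lt_of_le hv.1 with h | h
    · rw [← h, hy0]
    rcases eq_or_lt_of_le hv.2 with h2 | h2
    · rw [h2, hy1]
    · exact (hypos v ⟨h, h2⟩).le
  have hf_nonneg : ∀ v ∈ Set.Icc (0:ℝ) 1, 0 ≤ f v := by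
    intro v hv
    rcases eq_or_lt_of_le hv.1 with h | h
    · rw [← h, hf0]
    rcases eq_or_lt_of_le hv.2 with h2 | h2
    · rw [h2, hf1]
    · exact (hA v ⟨h, h2⟩).le
  have hc0 : 0 ≤ c := by
    by_contra hneg
    push_neg at hneg
    have hanti := antitoneOn_of_hasDeriv hyd (g' := fun v => c * a * Rab a b (y v) - f v)
      (fun v hv => by
        have hR := Rab_nonneg ha (hy_nonneg v (Set.Ioo_subset_Icc_self hv)) (b := b)
        have h1 : c * a * Rab a b (y v) ≤ 0 :=
          mul_nonpos_of_nonpos_of_nonneg (mul_nonpos_of_nonpos_of_nonneg hneg.le ha.le) hR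
        have h2 := hf_nonneg v (Set.Ioo_subset_Icc_self hv)
        show c * a * Rab a b (y v) - f v ≤ 0
        linarith)
    have := hanti (Set.left_mem_Icc.2 zero_le_one) (⟨by norm_num, by norm_num⟩ :
      (1/2 : ℝ) ∈ Set.Icc (0:ℝ) 1) (by norm_num)
    have hpos := hypos (1/2) ⟨by norm_num, by norm_num⟩
    rw [hy0] at this
    linarith
  rcases le_or_gt d 0 with hd0 | hd0
  · have hsq : Real.sqrt (d / a) = 0 :=
      Real.sqrt_eq_zero'.mpr (div_nonpos_of_nonpos_of_nonneg hd0 ha.le)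
    rw [hsq]
    linarith
  · by_contra hcon
    push_neg at hcon
    have hda : (0:ℝ) ≤ d / a := le_of_lt (div_pos hd0 ha)
    have hsq : Real.sqrt (d / a) ^ 2 = d / a := Real.sq_sqrt hda
    have hc2 : a * c ^ 2 < 4 * d := by
      have h1 : c ^ 2 < (2 * Real.sqrt (d / a)) ^ 2 := by
        have := Real.sqrt_nonneg (d / a)
        nlinarith
      have h2 : (2 * Real.sqrt (d / a)) ^ 2 = 4 * (d / a) := by
        rw [mul_pow, hsq]; norm_num
      rw [h2] at h1
      have h3 : d / a * a = d := div_mul_cancel₀ d ha.ne'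
      nlinarith
    obtain ⟨K, hKdef⟩ : ∃ K, K = c * Real.sqrt (2 * a) := ⟨_, rfl⟩
    have hK0 : 0 ≤ K := hKdef ▸ mul_nonneg hc0 (Real.sqrt_nonneg _)
    have hK2 : K ^ 2 = 2 * a * c ^ 2 := by
      rw [hKdef, mul_pow, Real.sq_sqrt (by positivity)]; ring
    obtain ⟨η, hηdef⟩ : ∃ η, η = (d - a * c ^ 2 / 4) / 2 := ⟨_, rfl⟩
    have hη : 0 < η := by rw [hηdef]; linarith
    obtain ⟨d', hd'def⟩ : ∃ d', d' = a * c ^ 2 / 4 + η := ⟨_, rfl⟩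
    have hd'd : d' < d := by rw [hd'def, hηdef]; linarith
    have hcaR : ∀ v ∈ Set.Icc (0:ℝ) 1, c * a * Rab a b (y v) ≤ K * Real.sqrt (y v) := by
      intro v hv
      have hs := hy_nonneg v hv
      have h1 := aR_le b ha hs
      have h2 : Real.sqrt (2 * a * y v) = Real.sqrt (2 * a) * Real.sqrt (y v) :=
        Real.sqrt_mul (by positivity) _
      calc c * a * Rab a b (y v) = c * (a * Rab a b (y v)) := by ring
        _ ≤ c * Real.sqrt (2 * a * y v) := mul_le_mul_of_nonneg_left h1 hc0
        _ = K * Real.sqrt (y v) := by rw [h2, hKdef]; ring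
    have hupper : ∀ v ∈ Set.Ioo (0:ℝ) 1, Real.sqrt (y v) ≤ K / 2 * v := by
      intro v₁ hv₁
      have hkey : ∀ v₀ ∈ Set.Ioo (0:ℝ) v₁,
          Real.sqrt (y v₁) ≤ Real.sqrt (y v₀) + K / 2 * v₁ := by
        intro v₀ hv₀
        have hsub : Set.Icc v₀ v₁ ⊆ Set.Icc 0 1 := Set.Icc_subset_Icc hv₀.1.le hv₁.2.le
        have hposI : ∀ v ∈ Set.Icc v₀ v₁, 0 < y v := fun v hv =>
          hypos v ⟨lt_of_lt_of_le hv₀.1 hv.1, lt_of_le_of_lt hv.2 hv₁.2⟩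
        have hanti := antitoneOn_of_hasDeriv
          (g := fun v => Real.sqrt (y v) - K / 2 * v)
          (g' := fun v => 1 / (2 * Real.sqrt (y v)) * (c * a * Rab a b (y v) - f v) - K / 2)
          (p := v₀) (q := v₁) ?hg ?h'
        case hg =>
          intro v hv
          have h1 := (hyd v (hsub hv)).mono hsub
          have h2 := (Real.hasDerivAt_sqrt (hposI v hv).ne').comp_hasDerivWithinAt v h1
          have h3 : HasDerivWithinAt (fun v : ℝ => K / 2 * v) (K / 2) (Set.Icc v₀ v₁) v := by
            simpa using (hasDerivWithinAt_id v (Set.Icc v₀ v₁)).const_mul (K / 2)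
          exact h2.sub h3
        case h' =>
          intro v hv
          have hyv := hposI v (Set.Ioo_subset_Icc_self hv)
          have hsq2 : 0 < Real.sqrt (y v) := Real.sqrt_pos.2 hyv
          have hb1 := hcaR v (hsub (Set.Ioo_subset_Icc_self hv))
          have hfv := hf_nonneg v (hsub (Set.Ioo_subset_Icc_self hv))
          have h5 : 1 / (2 * Real.sqrt (y v)) * (c * a * Rab a b (y v) - f v)
              ≤ 1 / (2 * Real.sqrt (y v)) * (K * Real.sqrt (y v)) :=
            mul_le_mul_of_nonneg_left (by linarith) (by positivity)
          have h6 : 1 / (2 * Real.sqrt (y v)) * (K * Real.sqrt (y v)) = K / 2 := by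
            field_simp
          show 1 / (2 * Real.sqrt (y v)) * (c * a * Rab a b (y v) - f v) - K / 2 ≤ 0
          linarith
        have h7 := hanti (Set.left_mem_Icc.2 hv₀.2.le) (Set.right_mem_Icc.2 hv₀.2.le) hv₀.2.le
        simp only at h7
        have hv₀0 := hv₀.1
        nlinarith [h7]
      have hle : 𝓝[>] (0:ℝ) ≤ 𝓝[Set.Icc (0:ℝ) 1] 0 := by
        rw [← nhdsWithin_Ioc_eq_nhdsGT (zero_lt_one)]
        exact nhdsWithin_mono _ Set.Ioc_subset_Icc_self
      have hy_cwa : Filter.Tendsto y (𝓝[>] (0:ℝ)) (𝓝 0) := by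
        have h8 := (hyd 0 ⟨le_refl 0, zero_le_one⟩).continuousWithinAt
        rw [ContinuousWithinAt, hy0] at h8
        exact h8.mono_left hle
      have hsqrt_t : Filter.Tendsto (fun v₀ => Real.sqrt (y v₀) + K / 2 * v₁)
          (𝓝[>] (0:ℝ)) (𝓝 (0 + K / 2 * v₁)) := by
        have h7 : Filter.Tendsto (fun v₀ => Real.sqrt (y v₀)) (𝓝[>] (0:ℝ)) (𝓝 0) := by
          have h9 := (Real.continuous_sqrt.tendsto 0).comp hy_cwa
          rwa [Real.sqrt_zero] at h9
        exact h7.add tendsto_const_nhds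
      have hev : ∀ᶠ v₀ in 𝓝[>] (0:ℝ), Real.sqrt (y v₁) ≤ Real.sqrt (y v₀) + K / 2 * v₁ := by
        filter_upwards [Ioo_mem_nhdsGT_of_mem (Set.left_mem_Ico.2 hv₁.1)] with v₀ hv₀
        exact hkey v₀ hv₀
      have h10 := ge_of_tendsto hsqrt_t hev
      linarith
    have hslope : Filter.Tendsto (slope f 0) (𝓝[>] (0:ℝ)) (𝓝 d) := by
      have h8 := hasDerivWithinAt_iff_tendsto_slope.mp hd
      have hset : Set.Ici (0:ℝ) \ {0} = Set.Ioi 0 := by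
        ext x; simp [lt_iff_le_and_ne, eq_comm]
      rwa [hset] at h8
    have h9 : ∀ᶠ v in 𝓝[>] (0:ℝ), d' < slope f 0 v :=
      hslope.eventually (eventually_gt_nhds hd'd)
    obtain ⟨u, hu, huδ⟩ := mem_nhdsGT_iff_exists_Ioc_subset.mp h9
    obtain ⟨δ, hδdef⟩ : ∃ δ, δ = min u (1/2) := ⟨_, rfl⟩
    have hδ0 : 0 < δ := hδdef ▸ lt_min hu (by norm_num)
    have hδ1 : δ < 1 := hδdef ▸ lt_of_le_of_lt (min_le_right _ _) (by norm_num)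
    have hfδ : ∀ v ∈ Set.Ioc (0:ℝ) δ, d' * v ≤ f v := by
      intro v hv
      have h11 := huδ (⟨hv.1, le_trans hv.2 (hδdef ▸ min_le_left _ _)⟩ : v ∈ Set.Ioc 0 u)
      simp only [Set.mem_setOf_eq] at h11
      rw [slope_def_field, hf0, sub_zero, sub_zero] at h11
      exact le_of_lt ((lt_div_iff₀ hv.1).mp h11)
    obtain ⟨v₀, hv₀def⟩ : ∃ v₀, v₀ = δ * Real.exp (-(K ^ 2 / 4 / η + 1)) := ⟨_, rfl⟩
    have hv₀0 : 0 < v₀ := by rw [hv₀def]; positivity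
    have hv₀δ : v₀ < δ := by
      have h12 : Real.exp (-(K ^ 2 / 4 / η + 1)) < 1 := by
        rw [Real.exp_lt_one_iff]
        have : 0 ≤ K ^ 2 / 4 / η := by positivity
        linarith
      calc v₀ = δ * Real.exp (-(K ^ 2 / 4 / η + 1)) := hv₀def
        _ < δ * 1 := by exact mul_lt_mul_of_pos_left h12 hδ0
        _ = δ := mul_one δ
    have hsub2 : Set.Icc v₀ δ ⊆ Set.Icc (0:ℝ) 1 := Set.Icc_subset_Icc hv₀0.le hδ1.le
    have hG := antitoneOn_of_hasDeriv
      (g := fun v => y v / v ^ 2 + η * Real.log v)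
      (g' := fun v => ((c * a * Rab a b (y v) - f v) * v ^ 2 - y v * (2 * v ^ 1)) / (v ^ 2) ^ 2
        + η * v⁻¹)
      (p := v₀) (q := δ) ?hg2 ?h'2
    case hg2 =>
      intro v hv
      have hv0 : 0 < v := lt_of_lt_of_le hv₀0 hv.1
      have h1 := (hyd v (hsub2 hv)).mono hsub2
      have h2 := h1.div ((hasDerivAt_pow 2 v).hasDerivWithinAt) (by positivity)
      have h3 := ((Real.hasDerivAt_log hv0.ne').hasDerivWithinAt
        (s := Set.Icc v₀ δ)).const_mul η
      exact h2.add h3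
    case h'2 =>
      intro v hv
      have hv0 : 0 < v := lt_trans hv₀0 hv.1
      have hvI : v ∈ Set.Icc (0:ℝ) 1 := ⟨hv0.le, le_trans hv.2.le hδ1.le⟩
      have hyv : 0 < y v := hypos v ⟨hv0, lt_of_lt_of_le hv.2 hδ1.le⟩
      obtain ⟨r, hrdef⟩ : ∃ r, r = Real.sqrt (y v) := ⟨_, rfl⟩
      have hr2 : r ^ 2 = y v := by rw [hrdef]; exact Real.sq_sqrt hyv.le
      have hr0 : 0 ≤ r := hrdef ▸ Real.sqrt_nonneg _
      have hb1 : c * a * Rab a b (y v) ≤ K * r := hrdef ▸ hcaR v hvI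
      have hfv : d' * v ≤ f v := hfδ v ⟨hv0, hv.2.le⟩
      have hd'K : d' = K ^ 2 / 8 + η := by rw [hd'def, hK2]; ring
      have e1 : (K * r - d' * v) * v ^ 2 - r ^ 2 * (2 * v)
          = -(v / 8) * (4 * r - K * v) ^ 2 - η * v ^ 3 := by rw [hd'K]; ring
      have m1 : (c * a * Rab a b (y v) - f v) * v ^ 2 ≤ (K * r - d' * v) * v ^ 2 :=
        mul_le_mul_of_nonneg_right (by linarith) (sq_nonneg v)
      have m2 : y v * (2 * v ^ 1) = r ^ 2 * (2 * v) := by rw [hr2]; ring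
      have m3 : 0 ≤ v / 8 * (4 * r - K * v) ^ 2 := by positivity
      have hA1 : (c * a * Rab a b (y v) - f v) * v ^ 2 - y v * (2 * v ^ 1) ≤ -(η * v ^ 3) := by
        rw [m2]; linarith [m1, e1, m3]
      have hv4 : (0:ℝ) < (v ^ 2) ^ 2 := by positivity
      have h12 : ((c * a * Rab a b (y v) - f v) * v ^ 2 - y v * (2 * v ^ 1)) / (v ^ 2) ^ 2
          ≤ -(η * v ^ 3) / (v ^ 2) ^ 2 := by
        gcongr
      have h13 : -(η * v ^ 3) / (v ^ 2) ^ 2 = -(η * v⁻¹) := by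
        field_simp
      rw [h13] at h12
      show ((c * a * Rab a b (y v) - f v) * v ^ 2 - y v * (2 * v ^ 1)) / (v ^ 2) ^ 2
        + η * v⁻¹ ≤ 0
      linarith
    have hGineq := hG (Set.left_mem_Icc.2 hv₀δ.le) (Set.right_mem_Icc.2 hv₀δ.le) hv₀δ.le
    simp only at hGineq
    have hyδ : 0 < y δ := hypos δ ⟨hδ0, hδ1⟩
    have hup : y v₀ / v₀ ^ 2 ≤ K ^ 2 / 4 := by
      have h14 := hupper v₀ ⟨hv₀0, lt_trans hv₀δ hδ1⟩
      have h15 : y v₀ ≤ (K / 2 * v₀) ^ 2 := by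
        nlinarith [Real.sq_sqrt (hy_nonneg v₀ ⟨hv₀0.le, (lt_trans hv₀δ hδ1).le⟩),
          Real.sqrt_nonneg (y v₀)]
      rw [div_le_iff₀ (by positivity)]
      calc y v₀ ≤ (K / 2 * v₀) ^ 2 := h15
        _ = K ^ 2 / 4 * v₀ ^ 2 := by ring
    have hlog : Real.log v₀ = Real.log δ - (K ^ 2 / 4 / η + 1) := by
      rw [hv₀def, Real.log_mul hδ0.ne' (Real.exp_ne_zero _), Real.log_exp]
      ring
    have hηK : η * (K ^ 2 / 4 / η) = K ^ 2 / 4 := by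
      rw [mul_comm, div_mul_cancel₀ _ hη.ne']
    have hpos2 : 0 < y δ / δ ^ 2 := by positivity
    rw [hlog] at hGineq
    have expand : η * (Real.log δ - (K ^ 2 / 4 / η + 1)) = η * Real.log δ - K ^ 2 / 4 - η := by
      rw [mul_sub, mul_add, mul_one, hηK]
      exact (sub_sub _ _ _).symm
    rw [expand] at hGineq
    linarith only [hGineq, hup, hpos2, hη]
end

section
/- Let f satisfy hypothesis (H), be of type A, B, or C, with F(1) > 0. For ε > 0 let c_ε* be the critical speed for parameters a = b = 1/ε, let y_ε be the corresponding solution of the first-order reduction y'(v) = c_ε*·√(y(2ε + y))/(ε + y) − f(v) with y(0) = y(1) = 0 and y > 0 on (0,1), and let v_ε : ℝ → (0,1) be the increasing solution of v'(z) = √(y_ε(v(z))·(2ε + y_ε(v(z))))/(ε + y_ε(v(z))) with v_ε(0) = V₀. Assume that, as ε → 0⁺, c_ε* → c̄, y_ε → ȳ uniformly on [0,1], and v_ε → v̄ locally uniformly on ℝ. If there exist z₀ < z₁ and v₀ ∈ [0,1) such that v̄(z) = z − z₀ + v₀ for every z ∈ [z₀, z₁], and v₁ := v̄(z₁) ∈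 (0,1], then c̄ = (F(v₁) − F(v₀))/(v₁ − v₀) + (ȳ(v₁) − ȳ(v₀))/(v₁ − v₀). -/
open Real Set Filter Topology

/-- Proposition 4.2: singular perturbation `a = b = 1/ε`. If the limit
profile contains a linear piece of slope `1` between the values `v₀` and `v₁`, then
`c̄ = (F(v₁) − F(v₀))/(v₁ − v₀) + (ȳ(v₁) − ȳ(v₀))/(v₁ − v₀)`. -/
theorem statement13 (f : ℝ → ℝ) (V₀ : ℝ) (hH : HypH f)
    (hT : (TypeA f ∧ V₀ = 1/2) ∨ ∃ α : ℝ, (TypeB f α ∨ TypeC f α) ∧ V₀ = α)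
    (hF1 : 0 < Ffn f 1)
    (cfun : ℝ → ℝ) (yfun : ℝ → ℝ → ℝ) (vfun : ℝ → ℝ → ℝ)
    (hcrit : ∀ ε : ℝ, 0 < ε → IsLeast {c | Admissible f (1/ε) (1/ε) c} (cfun ε))
    (hy : ∀ ε : ℝ, 0 < ε → yfun ε 0 = 0 ∧ yfun ε 1 = 0 ∧
      (∀ v ∈ Set.Ioo (0:ℝ) 1, 0 < yfun ε v) ∧
      ∀ v ∈ Set.Icc (0:ℝ) 1,
        HasDerivWithinAt (yfun ε)
          (cfun ε * Real.sqrt (yfun ε v * (2 * ε + yfun ε v)) / (ε + yfun ε v) - f v)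
          (Set.Icc 0 1) v)
    (hv : ∀ ε : ℝ, 0 < ε → (∀ z, vfun ε z ∈ Set.Ioo (0:ℝ) 1) ∧
      StrictMono (vfun ε) ∧ vfun ε 0 = V₀ ∧
      ∀ z, HasDerivAt (vfun ε)
        (Real.sqrt (yfun ε (vfun ε z) * (2 * ε + yfun ε (vfun ε z)))
          / (ε + yfun ε (vfun ε z))) z)
    (cbar : ℝ) (ybar vbar : ℝ → ℝ)
    (hcconv : Filter.Tendsto cfun (nhdsWithin 0 (Set.Ioi 0)) (nhds cbar))
    (hyconv : TendstoUniformlyOn yfun ybar (nhdsWithin 0 (Set.Ioi 0)) (Set.Icc 0 1))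
    (hvconv : ∀ K : Set ℝ, IsCompact K →
      TendstoUniformlyOn vfun vbar (nhdsWithin 0 (Set.Ioi 0)) K)
    (z₀ z₁ v₀ : ℝ) (hz : z₀ < z₁) (hv₀ : v₀ ∈ Set.Ico (0:ℝ) 1)
    (hlin : ∀ z ∈ Set.Icc z₀ z₁, vbar z = z - z₀ + v₀)
    (hv₁ : vbar z₁ ∈ Set.Ioc (0:ℝ) 1) :
    cbar = (Ffn f (vbar z₁) - Ffn f v₀) / (vbar z₁ - v₀)
      + (ybar (vbar z₁) - ybar v₀) / (vbar z₁ - v₀) := by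
  obtain ⟨hfc, hf0, hf1, -⟩ := hH
  set l := nhdsWithin (0:ℝ) (Set.Ioi 0) with hl
  haveI hlne : l.NeBot := nhdsGT_neBot 0
  set v₁ : ℝ := vbar z₁ with hv₁def
  have hz₀v : vbar z₀ = v₀ := by
    have := hlin z₀ ⟨le_refl _, hz.le⟩; simpa using this
  have hv₁eq : v₁ = z₁ - z₀ + v₀ := hlin z₁ ⟨hz.le, le_refl _⟩
  have hdzv : v₁ - v₀ = z₁ - z₀ := by rw [hv₁eq]; ring
  have hdpos : 0 < v₁ - v₀ := by rw [hdzv]; linarith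
  have hv₀le : v₀ ≤ v₁ := by linarith
  have hv₀mem : v₀ ∈ Set.Icc (0:ℝ) 1 := ⟨hv₀.1, hv₀.2.le⟩
  have hv₁mem : v₁ ∈ Set.Icc (0:ℝ) 1 := ⟨hv₁.1.le, hv₁.2⟩
  have hsub : Set.Icc v₀ v₁ ⊆ Set.Icc (0:ℝ) 1 := Set.Icc_subset_Icc hv₀.1 hv₁.2
  -- the function g
  set g : ℝ → ℝ → ℝ := fun ε v =>
    Real.sqrt (yfun ε v * (2 * ε + yfun ε v)) / (ε + yfun ε v) with hg
  -- facts for each ε > 0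
  have hfacts : ∀ ε : ℝ, 0 < ε →
      (∀ v ∈ Set.Icc (0:ℝ) 1, 0 ≤ yfun ε v) ∧
      ContinuousOn (yfun ε) (Set.Icc 0 1) ∧
      ContinuousOn (g ε) (Set.Icc 0 1) ∧
      (∀ v ∈ Set.Icc (0:ℝ) 1, 0 ≤ g ε v ∧ g ε v ≤ 1) := by
    intro ε hε
    obtain ⟨hy0, hy1, hypos, hyd⟩ := hy ε hε
    have hynn : ∀ v ∈ Set.Icc (0:ℝ) 1, 0 ≤ yfun ε v := by
      intro v hvm
      rcases eq_or_lt_of_le hvm.1 with h0 | h0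
      · rw [← h0, hy0]
      rcases eq_or_lt_of_le hvm.2 with h1 | h1
      · rw [h1, hy1]
      · exact (hypos v ⟨h0, h1⟩).le
    have hyc : ContinuousOn (yfun ε) (Set.Icc 0 1) :=
      fun v hvm => (hyd v hvm).continuousWithinAt
    have hden : ∀ v ∈ Set.Icc (0:ℝ) 1, ε + yfun ε v ≠ 0 := by
      intro v hvm
      have := hynn v hvm; positivity
    have hgc : ContinuousOn (g ε) (Set.Icc 0 1) := by
      apply ContinuousOn.div
      · exact Real.continuous_sqrt.comp_continuousOn
          (hyc.mul (continuousOn_const.add hyc))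
      · exact continuousOn_const.add hyc
      · exact hden
    refine ⟨hynn, hyc, hgc, ?_⟩
    intro v hvm
    have hyv := hynn v hvm
    have hdpos' : 0 < ε + yfun ε v := by positivity
    constructor
    · exact div_nonneg (Real.sqrt_nonneg _) hdpos'.le
    · rw [div_le_one hdpos']
      have h1 : yfun ε v * (2 * ε + yfun ε v) ≤ (ε + yfun ε v) ^ 2 := by nlinarith
      calc Real.sqrt (yfun ε v * (2 * ε + yfun ε v))
          ≤ Real.sqrt ((ε + yfun ε v) ^ 2) := Real.sqrt_le_sqrt h1
        _ = ε + yfun ε v := Real.sqrt_sq hdpos'.le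
  -- intervalIntegrability of g on subintervals of [0,1]
  have hgInt : ∀ ε : ℝ, 0 < ε → ∀ p ∈ Set.Icc (0:ℝ) 1, ∀ q ∈ Set.Icc (0:ℝ) 1,
      IntervalIntegrable (g ε) MeasureTheory.volume p q := by
    intro ε hε p hp q hq
    exact ((hfacts ε hε).2.2.1.mono (Set.uIcc_subset_Icc hp hq)).intervalIntegrable
  -- the key identity for each ε > 0
  have hkey : ∀ ε : ℝ, 0 < ε →
      cfun ε * (∫ v in v₀..v₁, g ε v)
        = yfun ε v₁ - yfun ε v₀ + (Ffn f v₁ - Ffn f v₀) := by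
    intro ε hε
    obtain ⟨hy0, hy1, hypos, hyd⟩ := hy ε hε
    obtain ⟨hynn, hyc, hgc, hgb⟩ := hfacts ε hε
    have hderivInt : IntervalIntegrable (fun v => cfun ε * g ε v - f v)
        MeasureTheory.volume v₀ v₁ := by
      apply ContinuousOn.intervalIntegrable
      apply ContinuousOn.mono (s := Set.Icc (0:ℝ) 1)
      · exact (continuousOn_const.mul hgc).sub hfc
      · exact Set.uIcc_subset_Icc hv₀mem hv₁mem
    have hftc : ∫ v in v₀..v₁, (cfun ε * g ε v - f v) = yfun ε v₁ - yfun ε v₀ := by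
      apply intervalIntegral.integral_eq_sub_of_hasDeriv_right_of_le hv₀le
      · exact hyc.mono hsub
      · intro x hx
        have hx01 : x ∈ Set.Ioo (0:ℝ) 1 :=
          ⟨lt_of_le_of_lt hv₀.1 hx.1, lt_of_lt_of_le hx.2 hv₁.2⟩
        have hmem : Set.Icc (0:ℝ) 1 ∈ nhds x :=
          Icc_mem_nhds hx01.1 hx01.2
        have := (hyd x (Set.Ioo_subset_Icc_self hx01)).hasDerivAt hmem
        have heq : cfun ε * Real.sqrt (yfun ε x * (2 * ε + yfun ε x)) / (ε + yfun ε x)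
            = cfun ε * g ε x := by rw [hg]; ring
        rw [heq] at this
        exact this.hasDerivWithinAt
      · exact hderivInt
    have hfInt : ∀ p ∈ Set.Icc (0:ℝ) 1, ∀ q ∈ Set.Icc (0:ℝ) 1,
        IntervalIntegrable f MeasureTheory.volume p q := by
      intro p hp q hq
      exact (hfc.mono (Set.uIcc_subset_Icc hp hq)).intervalIntegrable
    have hFF : Ffn f v₁ - Ffn f v₀ = ∫ v in v₀..v₁, f v := by
      have := intervalIntegral.integral_add_adjacent_intervals
        (hfInt 0 (Set.left_mem_Icc.2 zero_le_one) v₀ hv₀mem)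
        (hfInt v₀ hv₀mem v₁ hv₁mem)
      simp only [Ffn]
      linarith [this]
    have hsplit : ∫ v in v₀..v₁, (cfun ε * g ε v - f v)
        = cfun ε * (∫ v in v₀..v₁, g ε v) - ∫ v in v₀..v₁, f v := by
      rw [intervalIntegral.integral_sub
        ((hgInt ε hε v₀ hv₀mem v₁ hv₁mem).const_mul _)
        (hfInt v₀ hv₀mem v₁ hv₁mem), intervalIntegral.integral_const_mul]
    rw [hsplit] at hftc
    rw [hFF]
    linarith
  -- pointwise convergence of vfun at z₀, z₁
  have hvz₀ : Filter.Tendsto (fun ε => vfun ε z₀) l (nhds v₀) := by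
    have := (hvconv {z₀} isCompact_singleton).tendsto_at (Set.mem_singleton z₀)
    rwa [hz₀v] at this
  have hvz₁ : Filter.Tendsto (fun ε => vfun ε z₁) l (nhds v₁) :=
    (hvconv {z₁} isCompact_singleton).tendsto_at (Set.mem_singleton z₁)
  -- convergence of the integral of g
  have hIconv : Filter.Tendsto (fun ε => ∫ v in v₀..v₁, g ε v) l (nhds (v₁ - v₀)) := by
    have hmemIoi : Set.Ioi (0:ℝ) ∈ l := self_mem_nhdsWithin
    -- upper bound
    have hupper : ∀ᶠ ε in l, (∫ v in v₀..v₁, g ε v) ≤ v₁ - v₀ := by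
      filter_upwards [hmemIoi] with ε hε
      have := intervalIntegral.integral_mono_on (μ := MeasureTheory.volume)
        (f := g ε) (g := fun _ => (1:ℝ)) hv₀le
        (hgInt ε hε v₀ hv₀mem v₁ hv₁mem) intervalIntegrable_const
        (fun x hx => ((hfacts ε hε).2.2.2 x (hsub hx)).2)
      simpa using this
    -- lower bound
    have hlower : ∀ᶠ ε in l,
        2 * (vfun ε z₁ - vfun ε z₀) - (z₁ - z₀)
          - |vfun ε z₀ - v₀| - |vfun ε z₁ - v₁| ≤ ∫ v in v₀..v₁, g ε v := by
      filter_upwards [hmemIoi] with ε hε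
      obtain ⟨hvin, hvmono, hv0, hvd⟩ := hv ε hε
      obtain ⟨hynn, hyc, hgc, hgb⟩ := hfacts ε hε
      set a := vfun ε z₀ with ha
      set b := vfun ε z₁ with hb
      have hab : a ≤ b := (hvmono hz).le
      have hamem : a ∈ Set.Icc (0:ℝ) 1 := Set.Ioo_subset_Icc_self (hvin z₀)
      have hbmem : b ∈ Set.Icc (0:ℝ) 1 := Set.Ioo_subset_Icc_self (hvin z₁)
      -- h z = g ε (vfun ε z), continuous
      have hvcont : Continuous (vfun ε) :=
        continuous_iff_continuousAt.2 fun z => (hvd z).continuousAt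
      have hhc : Continuous (fun z => g ε (vfun ε z)) :=
        hgc.comp_continuous hvcont (fun z => Set.Ioo_subset_Icc_self (hvin z))
      have hvd' : ∀ z, HasDerivAt (vfun ε) (g ε (vfun ε z)) z := by
        intro z; exact hvd z
      -- FTC: ∫_{z₀}^{z₁} h = b - a
      have hftc2 : ∫ z in z₀..z₁, g ε (vfun ε z) = b - a :=
        intervalIntegral.integral_eq_sub_of_hasDerivAt
          (fun z _ => hvd' z) (hhc.intervalIntegrable z₀ z₁)
      -- substitution: ∫_a^b g = ∫_{z₀}^{z₁} h²
      have hsubst : ∫ z in z₀..z₁, (g ε (vfun ε z)) • (g ε (vfun ε z))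
          = ∫ v in a..b, g ε v := by
        have := intervalIntegral.integral_comp_smul_deriv' (a := z₀) (b := z₁)
          (fun z _ => hvd' z) hhc.continuousOn
          (hgc.mono (fun x ⟨z, _, hzx⟩ => hzx ▸ Set.Ioo_subset_Icc_self (hvin z)))
        simpa [Function.comp] using this
      have hsq : ∫ z in z₀..z₁, (2 * g ε (vfun ε z) - 1) ≤ ∫ v in a..b, g ε v := by
        rw [← hsubst]
        apply intervalIntegral.integral_mono_on hz.le
        · exact (((continuous_const.mul hhc)).sub continuous_const).intervalIntegrable z₀ z₁
        · exact (hhc.smul hhc).intervalIntegrable z₀ z₁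
        · intro x _
          have h1 := (hgb (vfun ε x) (Set.Ioo_subset_Icc_self (hvin x))).2
          have h0 := (hgb (vfun ε x) (Set.Ioo_subset_Icc_self (hvin x))).1
          simp only [smul_eq_mul]
          nlinarith
      have hJ : 2 * (b - a) - (z₁ - z₀) ≤ ∫ v in a..b, g ε v := by
        have : ∫ z in z₀..z₁, (2 * g ε (vfun ε z) - 1)
            = 2 * (b - a) - (z₁ - z₀) := by
          rw [intervalIntegral.integral_sub
            ((hhc.intervalIntegrable z₀ z₁).const_mul 2) intervalIntegrable_const,
            intervalIntegral.integral_const_mul, hftc2]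
          simp
        linarith [hsq]
      -- splitting the integral
      have hadd1 : (∫ v in v₀..a, g ε v) + (∫ v in a..b, g ε v)
          = ∫ v in v₀..b, g ε v :=
        intervalIntegral.integral_add_adjacent_intervals
          (hgInt ε hε v₀ hv₀mem a hamem) (hgInt ε hε a hamem b hbmem)
      have hadd2 : (∫ v in v₀..b, g ε v) + (∫ v in b..v₁, g ε v)
          = ∫ v in v₀..v₁, g ε v :=
        intervalIntegral.integral_add_adjacent_intervals
          (hgInt ε hε v₀ hv₀mem b hbmem) (hgInt ε hε b hbmem v₁ hv₁mem)
      -- tail bounds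
      have htail : ∀ p ∈ Set.Icc (0:ℝ) 1, ∀ q ∈ Set.Icc (0:ℝ) 1,
          |∫ v in p..q, g ε v| ≤ |q - p| := by
        intro p hp q hq
        have := intervalIntegral.norm_integral_le_of_norm_le_const
          (f := g ε) (a := p) (b := q) (C := 1) ?_
        · simpa using this
        · intro x hx
          have hx' : x ∈ Set.Icc (0:ℝ) 1 :=
            Set.uIcc_subset_Icc hp hq (Set.Ioc_subset_Icc_self hx)
          rw [Real.norm_eq_abs, abs_of_nonneg (hgb x hx').1]
          exact (hgb x hx').2
      have ht1 := htail v₀ hv₀mem a hamem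
      have ht2 := htail b hbmem v₁ hv₁mem
      have h1 : -|a - v₀| ≤ ∫ v in v₀..a, g ε v := by
        have := neg_abs_le (∫ v in v₀..a, g ε v)
        have h := abs_le.1 ht1
        linarith [h.1]
      have h2 : -|vfun ε z₁ - v₁| ≤ ∫ v in b..v₁, g ε v := by
        have h := abs_le.1 ht2
        have : |v₁ - b| = |b - v₁| := abs_sub_comm _ _
        rw [this] at h
        linarith [h.1]
      linarith
    -- limits of bounds
    have hlowlim : Filter.Tendsto
        (fun ε => 2 * (vfun ε z₁ - vfun ε z₀) - (z₁ - z₀)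
          - |vfun ε z₀ - v₀| - |vfun ε z₁ - v₁|) l (nhds (v₁ - v₀)) := by
      have t1 : Filter.Tendsto (fun ε => |vfun ε z₀ - v₀|) l (nhds 0) := by
        have h0 : Filter.Tendsto (fun ε => vfun ε z₀ - v₀) l (nhds (v₀ - v₀)) :=
          hvz₀.sub tendsto_const_nhds
        simpa using h0.abs
      have t2 : Filter.Tendsto (fun ε => |vfun ε z₁ - v₁|) l (nhds 0) := by
        have h0 : Filter.Tendsto (fun ε => vfun ε z₁ - v₁) l (nhds (v₁ - v₁)) :=
          hvz₁.sub tendsto_const_nhds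
        simpa using h0.abs
      have hmain : Filter.Tendsto (fun ε => 2 * (vfun ε z₁ - vfun ε z₀) - (z₁ - z₀)
          - |vfun ε z₀ - v₀| - |vfun ε z₁ - v₁|) l
          (nhds (2 * (v₁ - v₀) - (z₁ - z₀) - 0 - 0)) :=
        ((((hvz₁.sub hvz₀).const_mul 2).sub tendsto_const_nhds).sub t1).sub t2
      have heq : 2 * (v₁ - v₀) - (z₁ - z₀) - 0 - 0 = v₁ - v₀ := by rw [hdzv]; ring
      rwa [heq] at hmain
    exact tendsto_of_tendsto_of_tendsto_of_le_of_le' hlowlim tendsto_const_nhds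
      hlower hupper
  -- take limits in the key identity
  have hlhs : Filter.Tendsto (fun ε => cfun ε * (∫ v in v₀..v₁, g ε v)) l
      (nhds (cbar * (v₁ - v₀))) := hcconv.mul hIconv
  have hrhs : Filter.Tendsto
      (fun ε => yfun ε v₁ - yfun ε v₀ + (Ffn f v₁ - Ffn f v₀)) l
      (nhds (ybar v₁ - ybar v₀ + (Ffn f v₁ - Ffn f v₀))) :=
    (( hyconv.tendsto_at hv₁mem).sub (hyconv.tendsto_at hv₀mem)).add tendsto_const_nhds
  have hlhs' : Filter.Tendsto
      (fun ε => yfun ε v₁ - yfun ε v₀ + (Ffn f v₁ - Ffn f v₀)) l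
      (nhds (cbar * (v₁ - v₀))) := by
    apply hlhs.congr'
    filter_upwards [self_mem_nhdsWithin] with ε hε
    exact hkey ε hε
  have hfin : cbar * (v₁ - v₀) = ybar v₁ - ybar v₀ + (Ffn f v₁ - Ffn f v₀) :=
    tendsto_nhds_unique hlhs' hrhs
  have hne : v₁ - v₀ ≠ 0 := ne_of_gt hdpos
  field_simp
  linarith [hfin]
end

section
/- Let f satisfy hypothesis (H), be of type A, B, or C, with F(1) > 0. For ε > 0 let c_ε* be the critical speed for parameters a = b = 1/ε and let v_ε be the corresponding critical front profile normalized by v_ε(0) = V₀. Assume that c_ε* → c̄ and v_ε → v̄ locally uniformly on ℝ as ε → 0⁺. If v̄(z) = min(max(z + V₀, 0), 1) for every z ∈ ℝ (the fully piecewise linear limit profile with slope 1), then c̄ = F(1) = ∫₀¹ f(s) ds. -/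
open Real Set Filter Topology

lemma key_lemma (f : ℝ → ℝ) (hf : ContinuousOn f (Set.Icc 0 1)) (hF1 : 0 < Ffn f 1)
    (ε c : ℝ) (hε : 0 < ε)
    (y : ℝ → ℝ) (hy0 : y 0 = 0) (hy1 : y 1 = 0)
    (hypos : ∀ u ∈ Set.Ioo (0:ℝ) 1, 0 < y u)
    (hyd : ∀ u ∈ Set.Icc (0:ℝ) 1, HasDerivWithinAt y
      (c * Real.sqrt (y u * (2 * ε + y u)) / (ε + y u) - f u) (Set.Icc 0 1) u)
    (v : ℝ → ℝ) (hvmem : ∀ z, v z ∈ Set.Ioo (0:ℝ) 1)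
    (hvd : ∀ z, HasDerivAt v
      (Real.sqrt (y (v z) * (2 * ε + y (v z))) / (ε + y (v z))) z) :
    Ffn f 1 ≤ c ∧ ∀ z₁ z₂ : ℝ, z₁ ≤ z₂ →
      c * (2 * (v z₂ - v z₁) - (z₂ - z₁)) ≤ Ffn f 1 := by
  -- nonnegativity of y on [0,1]
  have ynn : ∀ u ∈ Set.Icc (0:ℝ) 1, 0 ≤ y u := by
    intro u hu
    rcases eq_or_lt_of_le hu.1 with h0 | h0
    · simp [← h0, hy0]
    rcases eq_or_lt_of_le hu.2 with h1 | h1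
    · simp [h1, hy1]
    · exact (hypos u ⟨h0, h1⟩).le
  -- clamped y and the slope function g
  set yt : ℝ → ℝ := fun u => y (min (max u 0) 1) with hyt
  have hclampmem : ∀ u : ℝ, min (max u 0) 1 ∈ Set.Icc (0:ℝ) 1 := fun u =>
    ⟨le_min (le_max_right u 0) zero_le_one, min_le_right _ _⟩
  have hyteq : ∀ u ∈ Set.Icc (0:ℝ) 1, yt u = y u := by
    intro u hu
    simp [hyt, max_eq_left hu.1, min_eq_left hu.2]
  have ytnn : ∀ u, 0 ≤ yt u := fun u => ynn _ (hclampmem u)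
  have ycont : ContinuousOn y (Set.Icc 0 1) := fun u hu =>
    (hyd u hu).continuousWithinAt
  have ytcont : Continuous yt := by
    apply ycont.comp_continuous
    · exact (continuous_id.max continuous_const).min continuous_const
    · exact hclampmem
  set g : ℝ → ℝ := fun u => Real.sqrt (yt u * (2 * ε + yt u)) / (ε + yt u) with hg
  have hden : ∀ u : ℝ, 0 < ε + yt u := fun u => by
    have := ytnn u; linarith
  have gcont : Continuous g := by
    apply Continuous.div
    · exact (ytcont.mul (continuous_const.add ytcont)).sqrt
    · exact continuous_const.add ytcont
    · exact fun u => (hden u).ne'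
  have gnn : ∀ u, 0 ≤ g u := fun u =>
    div_nonneg (Real.sqrt_nonneg _) (hden u).le
  have gle1 : ∀ u, g u ≤ 1 := by
    intro u
    rw [hg, div_le_one (hden u)]
    have h1 : yt u * (2 * ε + yt u) ≤ (ε + yt u) ^ 2 := by nlinarith [ytnn u]
    calc Real.sqrt (yt u * (2 * ε + yt u)) ≤ Real.sqrt ((ε + yt u) ^ 2) :=
          Real.sqrt_le_sqrt h1
      _ = ε + yt u := Real.sqrt_sq (hden u).le
  -- step A : c * I = F(1)
  set I : ℝ := ∫ u in (0:ℝ)..1, g u with hI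
  have hgint : ∀ a b : ℝ, IntervalIntegrable g MeasureTheory.volume a b :=
    fun a b => gcont.intervalIntegrable a b
  have hfint : IntervalIntegrable f MeasureTheory.volume 0 1 := by
    apply ContinuousOn.intervalIntegrable
    rwa [Set.uIcc_of_le zero_le_one]
  have hderiv2 : ∀ u ∈ Set.Icc (0:ℝ) 1,
      HasDerivWithinAt y (c * g u - f u) (Set.Icc 0 1) u := by
    intro u hu
    have := hyd u hu
    rw [hg]
    simpa [hyteq u hu, mul_div_assoc] using this
  have hint : IntervalIntegrable (fun u => c * g u - f u) MeasureTheory.volume 0 1 :=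
    ((continuous_const.mul gcont : Continuous fun u => c * g u).intervalIntegrable 0 1).sub hfint
  have hFTC : (∫ u in (0:ℝ)..1, (c * g u - f u)) = y 1 - y 0 := by
    apply intervalIntegral.integral_eq_sub_of_hasDeriv_right_of_le zero_le_one ycont
    · intro x hx
      exact (((hderiv2 x (Set.Ioo_subset_Icc_self hx)).hasDerivAt
        (Icc_mem_nhds hx.1 hx.2)).hasDerivWithinAt)
    · exact hint
  have hcI : c * I = Ffn f 1 := by
    have := hFTC
    rw [hy0, hy1, sub_zero,
      intervalIntegral.integral_sub (f := fun u => c * g u) ((continuous_const.mul gcont : Continuous fun u => c * g u).intervalIntegrable 0 1) hfint,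
      intervalIntegral.integral_const_mul] at this
    have : c * I - Ffn f 1 = 0 := this
    linarith
  have hInn : 0 ≤ I :=
    intervalIntegral.integral_nonneg zero_le_one (fun u _ => gnn u)
  have hIle1 : I ≤ 1 := by
    have := intervalIntegral.integral_mono_on zero_le_one (hgint 0 1)
      intervalIntegrable_const (fun u _ => gle1 u)
    simpa using this
  have hcpos : 0 < c := by
    by_contra h
    push_neg at h
    nlinarith
  have hF1c : Ffn f 1 ≤ c := by nlinarith
  refine ⟨hF1c, ?_⟩
  -- step D
  intro z₁ z₂ hz
  set G : ℝ → ℝ := fun t => ∫ u in (0:ℝ)..t, g u with hG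
  have hGd : ∀ t : ℝ, HasDerivAt G (g t) t := fun t =>
    intervalIntegral.integral_hasDerivAt_right (hgint 0 t)
      (gcont.stronglyMeasurable.stronglyMeasurableAtFilter)
      gcont.continuousAt
  have hvd' : ∀ z, HasDerivAt v (g (v z)) z := by
    intro z
    have heq := hyteq (v z) (Set.Ioo_subset_Icc_self (hvmem z))
    simpa [hg, heq] using hvd z
  have vcont : Continuous v := by
    rw [continuous_iff_continuousAt]
    exact fun z => (hvd' z).continuousAt
  have hGvd : ∀ z, HasDerivAt (fun z => G (v z)) (g (v z) * g (v z)) z := fun z =>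
    (hGd (v z)).comp z (hvd' z)
  have hgv_cont : Continuous fun z => g (v z) := gcont.comp vcont
  have h1 : (∫ z in z₁..z₂, g (v z) * g (v z)) = G (v z₂) - G (v z₁) :=
    intervalIntegral.integral_eq_sub_of_hasDerivAt (fun z _ => hGvd z)
      ((hgv_cont.mul hgv_cont).intervalIntegrable z₁ z₂)
  have h2 : (∫ z in z₁..z₂, g (v z)) = v z₂ - v z₁ :=
    intervalIntegral.integral_eq_sub_of_hasDerivAt (fun z _ => hvd' z)
      (hgv_cont.intervalIntegrable z₁ z₂)
  have h3 : 2 * (v z₂ - v z₁) - (z₂ - z₁) ≤ G (v z₂) - G (v z₁) := by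
    rw [← h1]
    have hmono : (∫ z in z₁..z₂, (2 * g (v z) - 1)) ≤ ∫ z in z₁..z₂, g (v z) * g (v z) :=
      intervalIntegral.integral_mono_on hz
      ((((continuous_const.mul hgv_cont).sub continuous_const :
        Continuous fun z => 2 * g (v z) - 1).intervalIntegrable z₁ z₂))
      ((hgv_cont.mul hgv_cont).intervalIntegrable z₁ z₂)
      (fun z _ => by nlinarith [sq_nonneg (g (v z) - 1), gnn (v z)])
    rw [intervalIntegral.integral_sub (f := fun z => 2 * g (v z)) ((continuous_const.mul hgv_cont : Continuous fun z => 2 * g (v z)).intervalIntegrable z₁ z₂)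
      (intervalIntegrable_const), intervalIntegral.integral_const_mul, h2] at hmono
    simpa using hmono
  have hGmono : Monotone G := by
    intro t₁ t₂ h
    have hsub : G t₂ - G t₁ = ∫ u in t₁..t₂, g u :=
      intervalIntegral.integral_interval_sub_left (hgint 0 t₂) (hgint 0 t₁)
    have : (0:ℝ) ≤ ∫ u in t₁..t₂, g u :=
      intervalIntegral.integral_nonneg h (fun u _ => gnn u)
    linarith
  have hGI : G (v z₂) - G (v z₁) ≤ I := by
    have hle2 : G (v z₂) ≤ G 1 := hGmono (hvmem z₂).2.le
    have hle1 : G 0 ≤ G (v z₁) := hGmono (hvmem z₁).1.le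
    have hG0 : G 0 = 0 := by simp [hG]
    have : G 1 = I := rfl
    linarith
  calc c * (2 * (v z₂ - v z₁) - (z₂ - z₁)) ≤ c * I := by nlinarith
    _ = Ffn f 1 := hcI

/-- Corollary 4.3: singular perturbation `a = b = 1/ε`. If the critical
profiles converge (locally uniformly) to the fully piecewise linear limit profile
`z ↦ min(max(z + V₀, 0), 1)`, then the limit critical speed equals `F(1) = ∫₀¹ f`. -/
theorem statement14 (f : ℝ → ℝ) (V₀ : ℝ) (hH : HypH f)
    (hT : (TypeA f ∧ V₀ = 1/2) ∨ ∃ α : ℝ, (TypeB f α ∨ TypeC f α) ∧ V₀ = α)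
    (hF1 : 0 < Ffn f 1)
    (cfun : ℝ → ℝ) (yfun : ℝ → ℝ → ℝ) (vfun : ℝ → ℝ → ℝ)
    (hcrit : ∀ ε : ℝ, 0 < ε → IsLeast {c | Admissible f (1/ε) (1/ε) c} (cfun ε))
    (hy : ∀ ε : ℝ, 0 < ε → yfun ε 0 = 0 ∧ yfun ε 1 = 0 ∧
      (∀ v ∈ Set.Ioo (0:ℝ) 1, 0 < yfun ε v) ∧
      ∀ v ∈ Set.Icc (0:ℝ) 1,
        HasDerivWithinAt (yfun ε)
          (cfun ε * Real.sqrt (yfun ε v * (2 * ε + yfun ε v)) / (ε + yfun ε v) - f v)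
          (Set.Icc 0 1) v)
    (hv : ∀ ε : ℝ, 0 < ε → (∀ z, vfun ε z ∈ Set.Ioo (0:ℝ) 1) ∧
      StrictMono (vfun ε) ∧ vfun ε 0 = V₀ ∧
      ∀ z, HasDerivAt (vfun ε)
        (Real.sqrt (yfun ε (vfun ε z) * (2 * ε + yfun ε (vfun ε z)))
          / (ε + yfun ε (vfun ε z))) z)
    (cbar : ℝ) (vbar : ℝ → ℝ)
    (hcconv : Filter.Tendsto cfun (nhdsWithin 0 (Set.Ioi 0)) (nhds cbar))
    (hvconv : ∀ K : Set ℝ, IsCompact K →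
      TendstoUniformlyOn vfun vbar (nhdsWithin 0 (Set.Ioi 0)) K)
    (hbar : ∀ z : ℝ, vbar z = min (max (z + V₀) 0) 1) :
    cbar = Ffn f 1 := by
  have fcont := hH.1
  have key : ∀ ε : ℝ, ε ∈ Set.Ioi (0:ℝ) → (Ffn f 1 ≤ cfun ε ∧ ∀ z₁ z₂ : ℝ, z₁ ≤ z₂ →
      cfun ε * (2 * (vfun ε z₂ - vfun ε z₁) - (z₂ - z₁)) ≤ Ffn f 1) := by
    intro ε hε
    obtain ⟨hy0, hy1, hypos, hyd⟩ := hy ε hε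
    obtain ⟨hvmem, _, _, hvd⟩ := hv ε hε
    exact key_lemma f fcont hF1 ε (cfun ε) hε (yfun ε) hy0 hy1 hypos hyd (vfun ε) hvmem hvd
  have hlow : Ffn f 1 ≤ cbar :=
    ge_of_tendsto hcconv (eventually_nhdsWithin_of_forall fun ε hε => (key ε hε).1)
  have hup : ∀ δ : ℝ, 0 < δ → δ < 1/2 → cbar * (1 - 2*δ) ≤ Ffn f 1 := by
    intro δ hδ0 hδ
    set z₁ : ℝ := δ - V₀ with hz₁
    set z₂ : ℝ := 1 - δ - V₀ with hz₂
    have hz : z₁ ≤ z₂ := by rw [hz₁, hz₂]; linarith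
    have hv1 : Tendsto (fun ε => vfun ε z₁) (nhdsWithin 0 (Set.Ioi 0)) (𝓝 (vbar z₁)) :=
      (hvconv {z₁} isCompact_singleton).tendsto_at (Set.mem_singleton _)
    have hv2 : Tendsto (fun ε => vfun ε z₂) (nhdsWithin 0 (Set.Ioi 0)) (𝓝 (vbar z₂)) :=
      (hvconv {z₂} isCompact_singleton).tendsto_at (Set.mem_singleton _)
    have hb1 : vbar z₁ = δ := by
      have h' : z₁ + V₀ = δ := by rw [hz₁]; ring
      rw [hbar, h', max_eq_left hδ0.le, min_eq_left (by linarith)]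
    have hb2 : vbar z₂ = 1 - δ := by
      have h' : z₂ + V₀ = 1 - δ := by rw [hz₂]; ring
      rw [hbar, h', max_eq_left (by linarith), min_eq_left (by linarith)]
    have htend : Tendsto (fun ε => cfun ε * (2 * (vfun ε z₂ - vfun ε z₁) - (z₂ - z₁)))
        (nhdsWithin 0 (Set.Ioi 0)) (𝓝 (cbar * (2 * (vbar z₂ - vbar z₁) - (z₂ - z₁)))) :=
      hcconv.mul (((hv2.sub hv1).const_mul 2).sub tendsto_const_nhds)
    have hle := le_of_tendsto htend
      (eventually_nhdsWithin_of_forall fun ε hε => (key ε hε).2 z₁ z₂ hz)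
    have hzz : z₂ - z₁ = 1 - 2*δ := by rw [hz₁, hz₂]; ring
    rw [hb1, hb2, hzz] at hle
    calc cbar * (1 - 2*δ) = cbar * (2 * ((1 - δ) - δ) - (1 - 2*δ)) := by ring
      _ ≤ Ffn f 1 := hle
  have hcbarpos : 0 < cbar := lt_of_lt_of_le hF1 hlow
  by_contra hne2
  have hlt : Ffn f 1 < cbar := lt_of_le_of_ne hlow (fun h => hne2 h.symm)
  set δ : ℝ := min ((cbar - Ffn f 1)/(4*cbar)) (1/4) with hδ
  have hδ0 : 0 < δ := lt_min (div_pos (by linarith) (by linarith)) (by norm_num)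
  have hδ2 : δ < 1/2 := lt_of_le_of_lt (min_le_right _ _) (by norm_num)
  have h := hup δ hδ0 hδ2
  have hδle : δ ≤ (cbar - Ffn f 1)/(4*cbar) := min_le_left _ _
  have h4 : δ * (4*cbar) ≤ cbar - Ffn f 1 :=
    (le_div_iff₀ (by linarith)).mp hδle
  nlinarith [h, h4, hcbarpos, hlt]
end

section
/- Let f satisfy hypothesis (H) and be of type C with switching point α and F(1) = 0 (balanced reaction). Then for every ε > 0 and parameters a = b = 1/ε: c = 0 is the unique admissible speed; the corresponding solution of the first-order reduction is y_ε(v) = −F(v); and the steady profiles v_ε, i.e., the increasing solutions of v'(z) = √(y_ε(v)·(2ε + y_ε(v)))/(ε + y_ε(v)) with v_ε(0) = α, converge pointwise on ℝ, as ε → 0⁺, to the piecewise linear function v̄(z) = min(max(z + α, 0), 1). -/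
open Real Set Filter Topology

open intervalIntegral

noncomputable def fext (f : ℝ → ℝ) : ℝ → ℝ :=
  Set.IccExtend zero_le_one ((Set.Icc (0:ℝ) 1).restrict f)

lemma fext_eq (f : ℝ → ℝ) {s : ℝ} (hs : s ∈ Set.Icc (0:ℝ) 1) : fext f s = f s := by
  simp [fext, Set.IccExtend_of_mem zero_le_one _ hs, Set.restrict_apply]
  rfl

lemma fext_cont {f : ℝ → ℝ} (hf : ContinuousOn f (Set.Icc 0 1)) : Continuous (fext f) :=
  hf.restrict.Icc_extend'

lemma Ffn_eq {f : ℝ → ℝ} {w : ℝ} (hw : w ∈ Set.Icc (0:ℝ) 1) :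
    Ffn f w = ∫ s in (0:ℝ)..w, fext f s := by
  refine intervalIntegral.integral_congr fun s hs => (fext_eq f ?_).symm
  rw [Set.uIcc_of_le hw.1] at hs
  exact ⟨hs.1, hs.2.trans hw.2⟩

lemma G_hasDeriv {f : ℝ → ℝ} (hf : ContinuousOn f (Set.Icc 0 1)) (u : ℝ) :
    HasDerivAt (fun w => ∫ s in (0:ℝ)..w, fext f s) (fext f u) u :=
  ((fext_cont hf).integral_hasStrictDerivAt 0 u).hasDerivAt

lemma Ffn_hasDerivWithin {f : ℝ → ℝ} (hf : ContinuousOn f (Set.Icc 0 1)) {v : ℝ}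
    (hv : v ∈ Set.Icc (0:ℝ) 1) :
    HasDerivWithinAt (Ffn f) (f v) (Set.Icc 0 1) v := by
  have h := (G_hasDeriv hf v).hasDerivWithinAt (s := Set.Icc (0:ℝ) 1)
  rw [fext_eq f hv] at h
  exact h.congr (fun x hx => Ffn_eq hx) (Ffn_eq hv)

noncomputable def gfun (ε y : ℝ) : ℝ := Real.sqrt (y * (2 * ε + y)) / (ε + y)

lemma gfun_nonneg {ε y : ℝ} (hε : 0 < ε) (hy : 0 ≤ y) : 0 ≤ gfun ε y :=
  div_nonneg (Real.sqrt_nonneg _) (by linarith)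

lemma gfun_le_one {ε y : ℝ} (hε : 0 < ε) (hy : 0 ≤ y) : gfun ε y ≤ 1 := by
  rw [gfun, div_le_one (by linarith)]
  calc Real.sqrt (y * (2 * ε + y)) ≤ Real.sqrt ((ε + y) ^ 2) := by
        apply Real.sqrt_le_sqrt; nlinarith
    _ = ε + y := Real.sqrt_sq (by linarith)

lemma gfun_upper {ε y k d : ℝ} (hε : 0 < ε) (hy : 0 ≤ y) (hk : 0 < k)
    (hyd : y ≤ k * d ^ 2 / 2) (hd : 0 ≤ d) (hd1 : d ≤ 1) :
    gfun ε y ≤ (Real.sqrt (k / ε) + k / (2 * ε)) * d := by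
  have h1 : gfun ε y ≤ Real.sqrt (y * (2 * ε + y)) / ε :=
    div_le_div_of_nonneg_left (Real.sqrt_nonneg _) hε (by linarith)
  have h2 : Real.sqrt (y * (2 * ε + y)) ≤ Real.sqrt (2 * ε * y) + y := by
    have hs := Real.sq_sqrt (show (0:ℝ) ≤ 2 * ε * y by positivity)
    have hsn := Real.sqrt_nonneg (2 * ε * y)
    calc Real.sqrt (y * (2 * ε + y)) ≤ Real.sqrt ((Real.sqrt (2 * ε * y) + y) ^ 2) := by
          apply Real.sqrt_le_sqrt; nlinarith [mul_nonneg hsn hy]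
      _ = _ := Real.sqrt_sq (by positivity)
  have h3 : Real.sqrt (2 * ε * y) ≤ Real.sqrt (ε * k) * d := by
    calc Real.sqrt (2 * ε * y) ≤ Real.sqrt (ε * k * d ^ 2) :=
          Real.sqrt_le_sqrt (by nlinarith)
      _ = Real.sqrt (ε * k) * d := by
          rw [Real.sqrt_mul (by positivity), Real.sqrt_sq hd]
  have h4 : y ≤ k / 2 * d := by
    nlinarith [mul_le_mul_of_nonneg_left hd1 (mul_nonneg hk.le hd)]
  have hsq : Real.sqrt (ε * k) = Real.sqrt (k / ε) * ε := by
    rw [show ε * k = (k / ε) * ε ^ 2 by rw [div_mul_eq_mul_div, eq_div_iff hε.ne']; ring,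
      Real.sqrt_mul (by positivity), Real.sqrt_sq hε.le]
  have h5 : gfun ε y ≤ (Real.sqrt (ε * k) * d + k / 2 * d) / ε := by
    refine h1.trans ?_
    gcongr
    linarith
  refine h5.trans (le_of_eq ?_)
  rw [hsq]; field_simp

lemma gfun_lower {ε y m : ℝ} (hε : 0 < ε) (hm : 0 < m) (hmy : m ≤ y) :
    1 - ε ^ 2 / m ^ 2 ≤ gfun ε y := by
  have hy : 0 < y := hm.trans_le hmy
  have hg0 := gfun_nonneg hε hy.le
  have hg1 := gfun_le_one hε hy.le
  have hsq : gfun ε y ^ 2 = 1 - ε ^ 2 / (ε + y) ^ 2 := by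
    rw [gfun, div_pow, Real.sq_sqrt (by positivity)]
    field_simp; ring
  have hd : ε ^ 2 / (ε + y) ^ 2 ≤ ε ^ 2 / m ^ 2 := by
    apply div_le_div_of_nonneg_left (sq_nonneg _) (by positivity)
    nlinarith
  nlinarith

section main

variable {f : ℝ → ℝ} {α : ℝ}
  (hfc : ContinuousOn f (Set.Icc 0 1))
  (hα : α ∈ Set.Ioo (0:ℝ) 1)
  (hneg : ∀ s ∈ Set.Ioo (0:ℝ) α, f s < 0)
  (hfpos : ∀ s ∈ Set.Ioo α 1, 0 < f s)
  (hbal : Ffn f 1 = 0)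

include hfc hbal in
lemma Ffn_split {v : ℝ} (hv : v ∈ Set.Icc (0:ℝ) 1) :
    -Ffn f v = ∫ s in v..1, fext f s := by
  have h1 : Ffn f 1 = ∫ s in (0:ℝ)..1, fext f s := Ffn_eq (by norm_num)
  have h2 : Ffn f v = ∫ s in (0:ℝ)..v, fext f s := Ffn_eq hv
  have hadd := intervalIntegral.integral_add_adjacent_intervals
    (a := (0:ℝ)) (b := v) (c := 1)
    ((fext_cont hfc).intervalIntegrable (μ := MeasureTheory.volume) _ _)
    ((fext_cont hfc).intervalIntegrable (μ := MeasureTheory.volume) _ _)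
  rw [← h1, hbal] at hadd
  rw [h2]; linarith

include hfc hα hneg hfpos hbal in
lemma Ffn_pos {v : ℝ} (hv : v ∈ Set.Ioo (0:ℝ) 1) : 0 < -Ffn f v := by
  rcases le_or_gt v α with hvα | hvα
  · have : Ffn f v = -∫ s in (0:ℝ)..v, -fext f s := by
      rw [Ffn_eq (⟨hv.1.le, hv.2.le⟩ : v ∈ Set.Icc (0:ℝ) 1)]
      simp [intervalIntegral.integral_neg]
    rw [this, neg_neg]
    refine intervalIntegral.intervalIntegral_pos_of_pos_on
      (((fext_cont hfc).neg).intervalIntegrable (μ := MeasureTheory.volume) _ _)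
      (fun x hx => ?_) hv.1
    have hx1 : x ∈ Set.Icc (0:ℝ) 1 := ⟨hx.1.le, (hx.2.trans_le (hvα.trans hα.2.le)).le⟩
    have : f x < 0 := hneg x ⟨hx.1, hx.2.trans_le hvα⟩
    simp [fext_eq f hx1]; linarith
  · rw [Ffn_split hfc hbal ⟨hv.1.le, hv.2.le⟩]
    refine intervalIntegral.intervalIntegral_pos_of_pos_on
      ((fext_cont hfc).intervalIntegrable (μ := MeasureTheory.volume) _ _)
      (fun x hx => ?_) hv.2
    have hx1 : x ∈ Set.Icc (0:ℝ) 1 := ⟨(hα.1.trans (hvα.trans hx.1)).le, hx.2.le⟩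
    rw [fext_eq f hx1]
    exact hfpos x ⟨hvα.trans hx.1, hx.2⟩

include hfc hα hneg hfpos hbal in
lemma Ffn_nonneg {u : ℝ} (hu : u ∈ Set.Icc (0:ℝ) 1) : 0 ≤ -Ffn f u := by
  rcases eq_or_lt_of_le hu.1 with h | h
  · simp [Ffn, ← h, intervalIntegral.integral_same]
  rcases eq_or_lt_of_le hu.2 with h1 | h1
  · rw [h1, hbal, neg_zero]
  · exact (Ffn_pos hfc hα hneg hfpos hbal ⟨h, h1⟩).le

include hfc in
lemma Ffn_quad_left {k : ℝ} (hk : 0 < k)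
    (hb : ∀ s ∈ Set.Icc (0:ℝ) 1, |f s| ≤ k * s) {v : ℝ} (hv : v ∈ Set.Icc (0:ℝ) 1) :
    -Ffn f v ≤ k * v ^ 2 / 2 := by
  have h2 : Ffn f v = ∫ s in (0:ℝ)..v, fext f s := Ffn_eq hv
  have hle : |∫ s in (0:ℝ)..v, fext f s| ≤ |∫ s in (0:ℝ)..v, k * s| := by
    rw [← Real.norm_eq_abs]
    have hae : ∀ᵐ t ∂MeasureTheory.volume.restrict (Set.uIoc (0:ℝ) v),
        ‖fext f t‖ ≤ k * t := by
      refine (MeasureTheory.ae_restrict_iff' measurableSet_uIoc).2 (.of_forall fun t ht => ?_)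
      rw [Set.uIoc_of_le hv.1] at ht
      have ht1 : t ∈ Set.Icc (0:ℝ) 1 := ⟨ht.1.le, ht.2.trans hv.2⟩
      rw [Real.norm_eq_abs, fext_eq f ht1]
      exact hb t ht1
    exact intervalIntegral.norm_integral_le_abs_of_norm_le hae
      ((continuous_const.mul continuous_id).intervalIntegrable (μ := MeasureTheory.volume) _ _)
  have hid : (∫ s in (0:ℝ)..v, k * s) = k * v ^ 2 / 2 := by
    rw [intervalIntegral.integral_const_mul, integral_id]; ring
  rw [hid, abs_of_nonneg (a := k * v ^ 2 / 2) (by nlinarith [sq_nonneg v])] at hle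
  have := neg_abs_le (∫ s in (0:ℝ)..v, fext f s)
  rw [h2]; rw [abs_le] at hle; linarith [hle.1]

include hfc hbal in
lemma Ffn_quad_right {k : ℝ} (hk : 0 < k)
    (hb : ∀ s ∈ Set.Icc (0:ℝ) 1, |f s| ≤ k * (1 - s)) {v : ℝ} (hv : v ∈ Set.Icc (0:ℝ) 1) :
    -Ffn f v ≤ k * (1 - v) ^ 2 / 2 := by
  rw [Ffn_split hfc hbal hv]
  have hle : |∫ s in v..1, fext f s| ≤ |∫ s in v..1, k * (1 - s)| := by
    rw [← Real.norm_eq_abs]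
    have hae : ∀ᵐ t ∂MeasureTheory.volume.restrict (Set.uIoc v 1),
        ‖fext f t‖ ≤ k * (1 - t) := by
      refine (MeasureTheory.ae_restrict_iff' measurableSet_uIoc).2 (.of_forall fun t ht => ?_)
      rw [Set.uIoc_of_le hv.2] at ht
      have ht1 : t ∈ Set.Icc (0:ℝ) 1 := ⟨hv.1.trans ht.1.le, ht.2⟩
      rw [Real.norm_eq_abs, fext_eq f ht1]
      exact hb t ht1
    exact intervalIntegral.norm_integral_le_abs_of_norm_le hae
      ((continuous_const.mul (continuous_const.sub continuous_id)).intervalIntegrable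
        (μ := MeasureTheory.volume) _ _)
  have hid : (∫ s in v..1, k * (1 - s)) = k * (1 - v) ^ 2 / 2 := by
    rw [intervalIntegral.integral_const_mul]
    have : (∫ s in v..1, (1 - s)) = (1 - v) - (1 ^ 2 - v ^ 2) / 2 := by
      rw [intervalIntegral.integral_sub intervalIntegrable_const
        intervalIntegral.intervalIntegrable_id, integral_id,
        intervalIntegral.integral_const]
      norm_num
    rw [this]; ring
  rw [hid, abs_of_nonneg (a := k * (1 - v) ^ 2 / 2) (by nlinarith [sq_nonneg (1 - v)])] at hle
  have := le_abs_self (∫ s in v..1, fext f s)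
  rw [abs_le] at hle; linarith [hle.2]

include hfc hbal in
lemma adm_forward {a c : ℝ} (ha : 0 < a) (hadm : Admissible f a a c) : c = 0 := by
  obtain ⟨y, hy0, hy1, hypos, hder⟩ := hadm
  have ycont : ContinuousOn y (Set.Icc 0 1) := fun v hv => (hder v hv).continuousWithinAt
  have ynn : ∀ v ∈ Set.Icc (0:ℝ) 1, 0 ≤ y v := by
    intro v hv
    rcases eq_or_lt_of_le hv.1 with h0 | h0
    · rw [← h0, hy0]
    rcases eq_or_lt_of_le hv.2 with h1 | h1
    · rw [h1, hy1]
    · exact (hypos v ⟨h0, h1⟩).le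
  set φ : ℝ → ℝ := fun v => Rab a a (y v) with hφ
  have hden : ∀ v ∈ Set.Icc (0:ℝ) 1, (0:ℝ) < a + a ^ 2 * y v := by
    intro v hv
    have := ynn v hv
    nlinarith [sq_nonneg a]
  have φcont : ContinuousOn φ (Set.Icc 0 1) := by
    apply ContinuousOn.div
    · exact (ycont.mul (continuousOn_const.add (continuousOn_const.mul ycont))).sqrt
    · exact continuousOn_const.add (continuousOn_const.mul ycont)
    · exact fun v hv => (hden v hv).ne'
  have hIcc : Set.uIcc (0:ℝ) 1 = Set.Icc 0 1 := Set.uIcc_of_le zero_le_one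
  have φint : IntervalIntegrable φ MeasureTheory.volume 0 1 :=
    (φcont.mono hIcc.subset).intervalIntegrable
  have fint : IntervalIntegrable f MeasureTheory.volume 0 1 :=
    (hfc.mono hIcc.subset).intervalIntegrable
  have y'int : IntervalIntegrable (fun v => c * a * φ v - f v) MeasureTheory.volume 0 1 :=
    (φint.const_mul _).sub fint
  have hftc : (∫ v in (0:ℝ)..1, (c * a * φ v - f v)) = y 1 - y 0 := by
    refine intervalIntegral.integral_eq_sub_of_hasDeriv_right_of_le zero_le_one ycont
      (fun x hx => ?_) y'int
    exact ((hder x (Set.Ioo_subset_Icc_self hx)).hasDerivAt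
      (Icc_mem_nhds hx.1 hx.2)).hasDerivWithinAt
  rw [hy0, hy1, sub_zero] at hftc
  have hsplit : (∫ v in (0:ℝ)..1, (c * a * φ v - f v))
      = c * a * (∫ v in (0:ℝ)..1, φ v) - Ffn f 1 := by
    rw [intervalIntegral.integral_sub (φint.const_mul _) fint,
      intervalIntegral.integral_const_mul]
    rfl
  rw [hbal, sub_zero, hftc] at hsplit
  have hφpos : 0 < ∫ v in (0:ℝ)..1, φ v := by
    refine intervalIntegral.intervalIntegral_pos_of_pos_on φint (fun x hx => ?_) zero_lt_one
    have hyx := hypos x hx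
    have hdx := hden x (Set.Ioo_subset_Icc_self hx)
    exact div_pos (Real.sqrt_pos.mpr (by nlinarith [sq_nonneg a])) hdx
  rcases mul_eq_zero.mp hsplit.symm with h | h
  · rcases mul_eq_zero.mp h with h' | h'
    · exact h'
    · exact absurd h' ha.ne'
  · exact absurd h hφpos.ne'

include hfc hα hneg hfpos hbal in
lemma min_lemma {p q : ℝ} (hp : 0 < p) (hq : q < 1) (hpq : p ≤ q) :
    ∃ m, 0 < m ∧ ∀ u ∈ Set.Icc p q, m ≤ -Ffn f u := by
  have hGdiff : Differentiable ℝ (fun u => ∫ s in (0:ℝ)..u, fext f s) :=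
    fun u => (G_hasDeriv hfc u).differentiableAt
  have hGcont : Continuous (fun u => ∫ s in (0:ℝ)..u, fext f s) := hGdiff.continuous
  have hcont : ContinuousOn (fun u => -Ffn f u) (Set.Icc p q) := by
    apply ContinuousOn.congr (hGcont.neg.continuousOn)
    intro u hu
    have hu1 : u ∈ Set.Icc (0:ℝ) 1 := ⟨hp.le.trans hu.1, hu.2.trans hq.le⟩
    simp [Ffn_eq hu1]
  obtain ⟨u₀, hu₀, hmin⟩ := isCompact_Icc.exists_isMinOn ⟨p, Set.left_mem_Icc.2 hpq⟩ hcont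
  exact ⟨-Ffn f u₀,
    Ffn_pos hfc hα hneg hfpos hbal ⟨hp.trans_le hu₀.1, hu₀.2.trans_lt hq⟩,
    fun u hu => isMinOn_iff.1 hmin u hu⟩

include hfc hα hneg hfpos hbal in
lemma traj_lt_one {k ε : ℝ} (hk : 0 < k)
    (hbL : ∀ s ∈ Set.Icc (0:ℝ) 1, |f s| ≤ k * s)
    (hbR : ∀ s ∈ Set.Icc (0:ℝ) 1, |f s| ≤ k * (1 - s))
    (hε : 0 < ε) {v : ℝ → ℝ} (hmono : StrictMono v) (h0 : v 0 = α)
    (hode : ∀ z, HasDerivAt v (gfun ε (-Ffn f (v z))) z) : ∀ z, v z < 1 := by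
  by_contra hcon
  push_neg at hcon
  obtain ⟨z₁, hz₁⟩ := hcon
  have vcont : Continuous v := by
    rw [continuous_iff_continuousAt]; exact fun z => (hode z).continuousAt
  have hz₁pos : 0 < z₁ := by
    by_contra hzz
    push_neg at hzz
    have := hmono.monotone hzz
    rw [h0] at this
    linarith [hα.2]
  obtain ⟨z₀, hz₀mem, hz₀⟩ : ∃ z₀ ∈ Set.Icc 0 z₁, v z₀ = 1 := by
    have h1 : (1:ℝ) ∈ Set.Icc (v 0) (v z₁) := ⟨by rw [h0]; exact hα.2.le, hz₁⟩
    obtain ⟨z₀, hmem, hval⟩ := intermediate_value_Icc hz₁pos.le vcont.continuousOn h1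
    exact ⟨z₀, hmem, hval⟩
  set K := Real.sqrt (k / ε) + k / (2 * ε) with hK
  set h : ℝ → ℝ := fun z => (1 - v z) * Real.exp (K * z) with hh
  have hder : ∀ z, HasDerivAt h
      ((0 - gfun ε (-Ffn f (v z))) * Real.exp (K * z)
        + (1 - v z) * (Real.exp (K * z) * K)) z := by
    intro z
    have hlin : HasDerivAt (fun t : ℝ => K * t) K z := by
      simpa using (hasDerivAt_id z).const_mul K
    exact ((hasDerivAt_const z (1:ℝ)).sub (hode z)).mul hlin.exp
  have hmonh : MonotoneOn h (Set.Icc 0 z₀) := by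
    refine monotoneOn_of_deriv_nonneg (convex_Icc 0 z₀) ?_ ?_ ?_
    · exact fun x _ => (hder x).continuousAt.continuousWithinAt
    · exact fun x _ => (hder x).differentiableAt.differentiableWithinAt
    intro x hx
    rw [interior_Icc] at hx
    rw [(hder x).deriv]
    have hu1 : α ≤ v x := by rw [← h0]; exact hmono.monotone hx.1.le
    have hu2 : v x ≤ 1 := by rw [← hz₀]; exact hmono.monotone hx.2.le
    have huIcc : v x ∈ Set.Icc (0:ℝ) 1 := ⟨hα.1.le.trans hu1, hu2⟩
    have hynn : 0 ≤ -Ffn f (v x) := Ffn_nonneg hfc hα hneg hfpos hbal huIcc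
    have hquad : -Ffn f (v x) ≤ k * (1 - v x) ^ 2 / 2 :=
      Ffn_quad_right hfc hbal hk hbR huIcc
    have hgle : gfun ε (-Ffn f (v x)) ≤ K * (1 - v x) :=
      gfun_upper hε hynn hk hquad (by linarith) (by linarith [hα.1])
    nlinarith [mul_nonneg (Real.exp_pos (K * x)).le (sub_nonneg.2 hgle)]
  have happ := hmonh (Set.left_mem_Icc.2 hz₀mem.1)
    (Set.right_mem_Icc.2 hz₀mem.1) hz₀mem.1
  have h00 : h 0 = 1 - α := by simp [hh, h0]
  have hz₀0 : h z₀ = 0 := by simp [hh, hz₀]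
  rw [h00, hz₀0] at happ
  linarith [hα.2]

include hfc hα hneg hfpos hbal in
lemma traj_pos {k ε : ℝ} (hk : 0 < k)
    (hbL : ∀ s ∈ Set.Icc (0:ℝ) 1, |f s| ≤ k * s)
    (hε : 0 < ε) {v : ℝ → ℝ} (hmono : StrictMono v) (h0 : v 0 = α)
    (hode : ∀ z, HasDerivAt v (gfun ε (-Ffn f (v z))) z) : ∀ z, 0 < v z := by
  by_contra hcon
  push_neg at hcon
  obtain ⟨z₁, hz₁⟩ := hcon
  have vcont : Continuous v := by
    rw [continuous_iff_continuousAt]; exact fun z => (hode z).continuousAt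
  have hz₁neg : z₁ < 0 := by
    by_contra hzz
    push_neg at hzz
    have := hmono.monotone hzz
    rw [h0] at this
    linarith [hα.1]
  obtain ⟨z₀, hz₀mem, hz₀⟩ : ∃ z₀ ∈ Set.Icc z₁ 0, v z₀ = 0 := by
    have h1 : (0:ℝ) ∈ Set.Icc (v z₁) (v 0) := ⟨hz₁, by rw [h0]; exact hα.1.le⟩
    obtain ⟨z₀, hmem, hval⟩ := intermediate_value_Icc hz₁neg.le vcont.continuousOn h1
    exact ⟨z₀, hmem, hval⟩
  set K := Real.sqrt (k / ε) + k / (2 * ε) with hK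
  set h : ℝ → ℝ := fun z => v z * Real.exp (-(K * z)) with hh
  have hder : ∀ z, HasDerivAt h
      (gfun ε (-Ffn f (v z)) * Real.exp (-(K * z))
        + v z * (Real.exp (-(K * z)) * -K)) z := by
    intro z
    have hlin : HasDerivAt (fun t : ℝ => -(K * t)) (-K) z := by
      simpa using (hasDerivAt_id z).const_mul (-K)
    exact (hode z).mul hlin.exp
  have hmonh : AntitoneOn h (Set.Icc z₀ 0) := by
    refine antitoneOn_of_deriv_nonpos (convex_Icc z₀ 0) ?_ ?_ ?_
    · exact fun x _ => (hder x).continuousAt.continuousWithinAt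
    · exact fun x _ => (hder x).differentiableAt.differentiableWithinAt
    intro x hx
    rw [interior_Icc] at hx
    rw [(hder x).deriv]
    have hu1 : 0 ≤ v x := by rw [← hz₀]; exact hmono.monotone hx.1.le
    have hu2 : v x ≤ α := by rw [← h0]; exact hmono.monotone hx.2.le
    have huIcc : v x ∈ Set.Icc (0:ℝ) 1 := ⟨hu1, hu2.trans hα.2.le⟩
    have hynn : 0 ≤ -Ffn f (v x) := Ffn_nonneg hfc hα hneg hfpos hbal huIcc
    have hquad : -Ffn f (v x) ≤ k * (v x) ^ 2 / 2 :=
      Ffn_quad_left hfc hk hbL huIcc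
    have hgle : gfun ε (-Ffn f (v x)) ≤ K * v x :=
      gfun_upper hε hynn hk hquad hu1 huIcc.2
    nlinarith [mul_nonneg (Real.exp_pos (-(K * x))).le (sub_nonneg.2 hgle)]
  have happ := hmonh (Set.left_mem_Icc.2 hz₀mem.2)
    (Set.right_mem_Icc.2 hz₀mem.2) hz₀mem.2
  have h00 : h 0 = α := by simp [hh, h0]
  have hz₀0 : h z₀ = 0 := by simp [hh, hz₀]
  rw [h00, hz₀0] at happ
  linarith [hα.1]

lemma v_lip {ε : ℝ} (hε : 0 < ε) {v : ℝ → ℝ}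
    (hode : ∀ z, HasDerivAt v (gfun ε (-Ffn f (v z))) z)
    (hnn : ∀ z, 0 ≤ -Ffn f (v z)) :
    ∀ z₁ z₂ : ℝ, z₁ ≤ z₂ → v z₂ - v z₁ ≤ z₂ - z₁ := by
  have hder : ∀ x : ℝ, HasDerivAt (fun t => t - v t) (1 - gfun ε (-Ffn f (v x))) x :=
    fun x => (hasDerivAt_id x).sub (hode x)
  have hmon : Monotone (fun t => t - v t) := by
    refine monotone_of_deriv_nonneg ?_ ?_
    · exact fun x => (hder x).differentiableAt
    · intro x
      rw [(hder x).deriv]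
      linarith [gfun_le_one hε (hnn x)]
  intro z₁ z₂ hz
  have := hmon hz
  simp only at this
  linarith

lemma v_speed {ε : ℝ} (hε : 0 < ε) {v : ℝ → ℝ}
    (hode : ∀ z, HasDerivAt v (gfun ε (-Ffn f (v z))) z)
    {t₁ t₂ m : ℝ} (ht : t₁ ≤ t₂) (hm : 0 < m)
    (hbound : ∀ t ∈ Set.Icc t₁ t₂, m ≤ -Ffn f (v t)) :
    (1 - ε ^ 2 / m ^ 2) * (t₂ - t₁) ≤ v t₂ - v t₁ := by
  have hder : ∀ x : ℝ, HasDerivAt (fun t => v t - (1 - ε ^ 2 / m ^ 2) * t)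
      (gfun ε (-Ffn f (v x)) - (1 - ε ^ 2 / m ^ 2)) x := by
    intro x
    exact (hode x).sub (by simpa using (hasDerivAt_id x).const_mul (1 - ε ^ 2 / m ^ 2))
  have hmon : MonotoneOn (fun t => v t - (1 - ε ^ 2 / m ^ 2) * t) (Set.Icc t₁ t₂) := by
    refine monotoneOn_of_deriv_nonneg (convex_Icc t₁ t₂) ?_ ?_ ?_
    · exact fun x _ => (hder x).continuousAt.continuousWithinAt
    · exact fun x _ => (hder x).differentiableAt.differentiableWithinAt
    · intro x hx
      rw [interior_Icc] at hx
      rw [(hder x).deriv]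
      have := gfun_lower hε hm (hbound x (Set.Ioo_subset_Icc_self hx))
      linarith
  have happ := hmon (Set.left_mem_Icc.2 ht) (Set.right_mem_Icc.2 ht) ht
  simp only at happ
  linarith

end main


lemma eta_small {ε m δ' w : ℝ} (hε : 0 < ε) (hm : 0 < m) (hδ' : 0 < δ') (hw : 0 < w)
    (h1 : ε < m) (h2' : ε * (w + 1) < δ' * m) : ε ^ 2 / m ^ 2 * w < δ' := by
  rw [div_mul_eq_mul_div, div_lt_iff₀ (by positivity)]
  have A : ε * (ε * (w + 1)) < ε * (δ' * m) := mul_lt_mul_of_pos_left h2' hε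
  have B : δ' * m * ε < δ' * m * m := mul_lt_mul_of_pos_left h1 (mul_pos hδ' hm)
  nlinarith [A, B, sq_nonneg ε]

/-- balanced type C reactions. For `a = b = 1/ε`, `c = 0` is the unique
admissible speed, the first-order reduction is solved by `y = −F`, and the steady
profiles converge pointwise to the piecewise linear profile `z ↦ min(max(z+α,0),1)`. -/
theorem statement15 (f : ℝ → ℝ) (α : ℝ) (hH : HypH f)
    (hC : TypeC f α) (hbal : Ffn f 1 = 0)
    (vfun : ℝ → ℝ → ℝ)
    (hv : ∀ ε : ℝ, 0 < ε → StrictMono (vfun ε) ∧ vfun ε 0 = α ∧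
      ∀ z, HasDerivAt (vfun ε)
        (Real.sqrt ((-Ffn f (vfun ε z)) * (2 * ε + -Ffn f (vfun ε z)))
          / (ε + -Ffn f (vfun ε z))) z) :
    (∀ ε : ℝ, 0 < ε → ∀ c : ℝ, Admissible f (1/ε) (1/ε) c ↔ c = 0) ∧
    ((-Ffn f 0 = 0) ∧ (-Ffn f 1 = 0) ∧ (∀ v ∈ Set.Ioo (0:ℝ) 1, 0 < -Ffn f v) ∧
      ∀ v ∈ Set.Icc (0:ℝ) 1,
        HasDerivWithinAt (fun w => -Ffn f w) (-f v) (Set.Icc 0 1) v) ∧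
    (∀ z : ℝ, Filter.Tendsto (fun ε => vfun ε z) (nhdsWithin 0 (Set.Ioi 0))
      (nhds (min (max (z + α) 0) 1))) := by
  obtain ⟨hfc, hf0, hf1, k, hk, hkb⟩ := hH
  obtain ⟨hα, hneg, hfpos, -⟩ := hC
  have hbL : ∀ s ∈ Set.Icc (0:ℝ) 1, |f s| ≤ k * s := fun s hs => (hkb s hs).1
  have hbR : ∀ s ∈ Set.Icc (0:ℝ) 1, |f s| ≤ k * (1 - s) := fun s hs => (hkb s hs).2
  have hF0 : -Ffn f 0 = 0 := by simp [Ffn]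
  have hF1 : -Ffn f 1 = 0 := by rw [hbal, neg_zero]
  have hFder : ∀ v ∈ Set.Icc (0:ℝ) 1,
      HasDerivWithinAt (fun w => -Ffn f w) (-f v) (Set.Icc 0 1) v :=
    fun v hvv => (Ffn_hasDerivWithin hfc hvv).neg
  refine ⟨?_, ⟨hF0, hF1, fun v hvv => Ffn_pos hfc hα hneg hfpos hbal hvv, hFder⟩, ?_⟩
  · intro ε hε c
    constructor
    · exact fun h => adm_forward hfc hbal (by positivity) h
    · rintro rfl
      refine ⟨fun w => -Ffn f w, hF0, hF1,
        fun v hvv => Ffn_pos hfc hα hneg hfpos hbal hvv, fun v hvv => ?_⟩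
      have h := hFder v hvv
      convert h using 1
      ring
  · intro z
    rcases lt_trichotomy z 0 with hz | hz | hz
    · -- z < 0
      have hLeq : min (max (z + α) 0) 1 = max (z + α) 0 :=
        min_eq_left (max_le (by linarith [hα.2]) zero_le_one)
      rw [hLeq, Metric.tendsto_nhds]
      intro δ hδ
      set δ' := min (δ / 2) (α / 2) with hδ'def
      have hδ'pos : 0 < δ' := lt_min (by linarith) (by linarith [hα.1])
      have hδ'le1 : δ' ≤ α / 2 := min_le_right _ _
      have hδ'le2 : δ' ≤ δ / 2 := min_le_left _ _
      obtain ⟨m, hm, hmb⟩ := min_lemma hfc hα hneg hfpos hbal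
        (p := δ') (q := α) hδ'pos hα.2 (by linarith [hα.1])
      have hε₀pos : 0 < min m (δ' * m / (-z + 1)) := lt_min hm (div_pos (mul_pos hδ'pos hm) (by linarith))
      filter_upwards [Ioo_mem_nhdsGT_of_mem (Set.left_mem_Ico.2 hε₀pos)] with ε hεm
      obtain ⟨hε, hεlt⟩ := hεm
      have h1 : ε < m := hεlt.trans_le (min_le_left _ _)
      have h2 : ε < δ' * m / (-z + 1) := hεlt.trans_le (min_le_right _ _)
      have h2' : ε * (-z + 1) < δ' * m := (lt_div_iff₀ (by linarith)).1 h2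
      have hη := eta_small hε hm hδ'pos (by linarith : (0:ℝ) < -z) h1 (by linarith)
      obtain ⟨hmono, h0, hodeRaw⟩ := hv ε hε
      have hode : ∀ t, HasDerivAt (vfun ε) (gfun ε (-Ffn f (vfun ε t))) t :=
        fun t => hodeRaw t
      have hlt1 := traj_lt_one hfc hα hneg hfpos hbal hk hbL hbR hε hmono h0 hode
      have hpos0 := traj_pos hfc hα hneg hfpos hbal hk hbL hε hmono h0 hode
      have hnn : ∀ t : ℝ, 0 ≤ -Ffn f (vfun ε t) := fun t =>
        Ffn_nonneg hfc hα hneg hfpos hbal ⟨(hpos0 t).le, (hlt1 t).le⟩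
      have hlip := v_lip hε hode hnn
      have hlb : max (z + α) 0 ≤ vfun ε z := by
        refine max_le ?_ (hpos0 z).le
        have := hlip z 0 hz.le
        rw [h0] at this
        linarith
      have hub : vfun ε z < max (z + α) 0 + δ' := by
        by_contra hcon
        push_neg at hcon
        have hbd : ∀ t ∈ Set.Icc z (0:ℝ), m ≤ -Ffn f (vfun ε t) := by
          intro t ht
          refine hmb _ ⟨?_, ?_⟩
          · have := hmono.monotone ht.1
            have h0' := le_max_right (z + α) (0:ℝ)
            linarith
          · have := hmono.monotone ht.2
            rw [h0] at this
            exact this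
        have hsp := v_speed hε hode hz.le hm hbd
        rw [h0] at hsp
        have hL1 := le_max_left (z + α) (0:ℝ)
        nlinarith [hsp, hη, hcon]
      rw [Real.dist_eq, abs_of_nonneg (by linarith)]
      linarith
    · -- z = 0
      subst hz
      have hLeq : min (max ((0:ℝ) + α) 0) 1 = α := by
        rw [zero_add, max_eq_left hα.1.le, min_eq_left hα.2.le]
      rw [hLeq]
      refine Tendsto.congr' ?_ tendsto_const_nhds
      filter_upwards [self_mem_nhdsWithin] with ε hε
      exact ((hv ε hε).2.1).symm
    · -- z > 0
      have hLeq : min (max (z + α) 0) 1 = min (z + α) 1 := by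
        rw [max_eq_left (by linarith [hα.1])]
      rw [hLeq, Metric.tendsto_nhds]
      intro δ hδ
      set δ' := min (δ / 2) ((1 - α) / 2) with hδ'def
      have hδ'pos : 0 < δ' := lt_min (by linarith) (by linarith [hα.2])
      have hδ'le1 : δ' ≤ (1 - α) / 2 := min_le_right _ _
      have hδ'le2 : δ' ≤ δ / 2 := min_le_left _ _
      obtain ⟨m, hm, hmb⟩ := min_lemma hfc hα hneg hfpos hbal
        (p := α) (q := 1 - δ') hα.1 (by linarith) (by linarith [hα.2])
      have hε₀pos : 0 < min m (δ' * m / (z + 1)) := lt_min hm (div_pos (mul_pos hδ'pos hm) (by linarith))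
      filter_upwards [Ioo_mem_nhdsGT_of_mem (Set.left_mem_Ico.2 hε₀pos)] with ε hεm
      obtain ⟨hε, hεlt⟩ := hεm
      have h1 : ε < m := hεlt.trans_le (min_le_left _ _)
      have h2 : ε < δ' * m / (z + 1) := hεlt.trans_le (min_le_right _ _)
      have h2' : ε * (z + 1) < δ' * m := (lt_div_iff₀ (by linarith)).1 h2
      have hη := eta_small hε hm hδ'pos hz h1 h2'
      obtain ⟨hmono, h0, hodeRaw⟩ := hv ε hε
      have hode : ∀ t, HasDerivAt (vfun ε) (gfun ε (-Ffn f (vfun ε t))) t :=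
        fun t => hodeRaw t
      have hlt1 := traj_lt_one hfc hα hneg hfpos hbal hk hbL hbR hε hmono h0 hode
      have hpos0 := traj_pos hfc hα hneg hfpos hbal hk hbL hε hmono h0 hode
      have hnn : ∀ t : ℝ, 0 ≤ -Ffn f (vfun ε t) := fun t =>
        Ffn_nonneg hfc hα hneg hfpos hbal ⟨(hpos0 t).le, (hlt1 t).le⟩
      have hlip := v_lip hε hode hnn
      have hub : vfun ε z ≤ min (z + α) 1 := by
        refine le_min ?_ (hlt1 z).le
        have := hlip 0 z hz.le
        rw [h0] at this
        linarith
      have hlb : min (z + α) 1 - δ' < vfun ε z := by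
        by_contra hcon
        push_neg at hcon
        have hbd : ∀ t ∈ Set.Icc (0:ℝ) z, m ≤ -Ffn f (vfun ε t) := by
          intro t ht
          refine hmb _ ⟨?_, ?_⟩
          · have := hmono.monotone ht.1
            rw [h0] at this
            exact this
          · have := hmono.monotone ht.2
            have hL1 := min_le_right (z + α) (1:ℝ)
            linarith
        have hsp := v_speed hε hode hz.le hm hbd
        rw [h0] at hsp
        have hL1 := min_le_left (z + α) (1:ℝ)
        nlinarith [hsp, hη, hcon]
      rw [Real.dist_eq, abs_of_nonpos (by linarith)]
      linarith
end
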